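/- arXiv:2412.20993 — 5 statements merged into one kernel-verified Lean document; each statement's English description precedes it below -/
import Mathlib

section
/- Let α be any type, f : ℕ → α a sequence, i ∈ ℕ, and k ≥ 1. Suppose f(i+j) = f(i+j+k) for every j with 1 ≤ j ≤ k, and f(i+j) = f(i+j+k−1) for every j with 1 ≤ j ≤ k−1. Then f is constant on the indices i+1, …, i+2k−1; that is, f(i+j) = f(i+l) for all j, l with 1 ≤ j, l ≤ 2k−1. -/
/-- **Connectivity step.** If a sequence `f : ℕ → α` satisfies
`f (i+j) = f (i+j+k)` for all `1 ≤ j ≤ k` and `f (i+j) = f (i+j+(k-1))` for all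
`1 ≤ j ≤ k-1` (with `k ≥ 1`), then `f` is constant on the indices
`i+1, …, i+2k-1`: `f (i+j) = f (i+l)` for all `1 ≤ j, l ≤ 2k-1`. -/
theorem constant_of_two_periods {α : Type*} (f : ℕ → α) (i k : ℕ) (hk : 1 ≤ k)
    (h1 : ∀ j, 1 ≤ j → j ≤ k → f (i + j) = f (i + j + k))
    (h2 : ∀ j, 1 ≤ j → j ≤ k - 1 → f (i + j) = f (i + j + (k - 1))) :
    ∀ j l, 1 ≤ j → j ≤ 2 * k - 1 → 1 ≤ l → l ≤ 2 * k - 1 → f (i + j) = f (i + l) := by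
  have chain : ∀ m, k ≤ m → m ≤ 2 * k - 1 → f (i + m) = f (i + k) := by
    intro m
    induction m with
    | zero => intro h1' _; omega
    | succ n ih =>
      intro hm1 hm2
      rcases eq_or_lt_of_le hm1 with h | h
      · rw [← h]
      · have hn : k ≤ n := by omega
        have e2 := h2 (n - (k - 1)) (by omega) (by omega)
        have e1 := h1 (n - (k - 1)) (by omega) (by omega)
        have a2 : i + (n - (k - 1)) + (k - 1) = i + n := by omega
        have a1 : i + (n - (k - 1)) + k = i + (n + 1) := by omega
        rw [a2] at e2
        rw [a1] at e1
        rw [← e1, e2]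
        exact ih hn (by omega)
  have key : ∀ m, 1 ≤ m → m ≤ 2 * k - 1 → f (i + m) = f (i + k) := by
    intro m hm1 hm2
    rcases le_or_gt k m with h | h
    · exact chain m h hm2
    · have e1 := h1 m hm1 (by omega)
      have : i + m + k = i + (m + k) := by omega
      rw [this] at e1
      rw [e1]
      exact chain (m + k) (by omega) (by omega)
  intro j l hj1 hj2 hl1 hl2
  rw [key j hj1 hj2, key l hl1 hl2]
end

section
/- (Lemma 2, mixture stability implies pointwise stability.) Let P : ℕ → (Fin M → ℝ) be a sequence of probability mass functions on M answer groups, let i ∈ ℕ and k ≥ 1, and define the mixtures P̄_a^{a+w} = (1/w)·∑_{j=1}^{w} P_{a+j}. If TV(P̄_i^{i+k}, P̄_{i+j}^{i+j+k}) = 0 for every j with 1 ≤ j ≤ k, and TV(P̄_i^{i+k−1}, P̄_{i+j}^{i+j+k−1}) = 0 for every j with 1 ≤ j ≤ k−1, then P_j = P_l for all indices j, l with i+1 ≤ j, l ≤ i+2k−1. -/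
/-- Total variation distance between two functions `Fin M → ℝ`
(e.g. probability mass functions on `M` answer groups):
`TV(Q, R) = (1/2) ∑ s, |Q s - R s|`. -/
noncomputable def tvDist {M : ℕ} (Q R : Fin M → ℝ) : ℝ :=
  (1 / 2) * ∑ s, |Q s - R s|

/-- The mixture of the window of width `w` starting after index `a`:
`P̄_a^{a+w} = (1/w) • ∑_{j=1}^{w} P (a + j)`. -/
noncomputable def windowMix {M : ℕ} (P : ℕ → Fin M → ℝ) (a w : ℕ) : Fin M → ℝ :=
  (1 / (w : ℝ)) • ∑ j ∈ Finset.Icc 1 w, P (a + j)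

lemma tvDist_zero_eq {M : ℕ} {Q R : Fin M → ℝ} (h : tvDist Q R = 0) : Q = R := by
  funext s
  have h' : ∑ t, |Q t - R t| = 0 := by
    unfold tvDist at h; linarith
  have hs := (Finset.sum_eq_zero_iff_of_nonneg (fun t _ => abs_nonneg _)).mp h' s
    (Finset.mem_univ s)
  have : Q s - R s = 0 := abs_eq_zero.mp hs
  linarith

lemma icc_to_range {M : ℕ} (P : ℕ → Fin M → ℝ) (a w : ℕ) :
    ∑ j ∈ Finset.Icc 1 w, P (a + j) = ∑ j ∈ Finset.range w, P (a + 1 + j) := by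
  rw [← Finset.Ico_add_one_right_eq_Icc, Finset.sum_Ico_eq_sum_range]
  rw [show w + 1 - 1 = w from rfl]
  exact Finset.sum_congr rfl fun j _ => by rw [show a + (1 + j) = a + 1 + j by omega]

lemma sums_eq_of_windowMix_eq {M : ℕ} (P : ℕ → Fin M → ℝ) {a b w : ℕ} (hw : 1 ≤ w)
    (h : windowMix P a w = windowMix P b w) :
    ∑ j ∈ Finset.range w, P (a + 1 + j) = ∑ j ∈ Finset.range w, P (b + 1 + j) := by
  have hw' : (0:ℝ) < w := by exact_mod_cast hw
  have hne : (1 / (w:ℝ)) ≠ 0 := by positivity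
  have h2 : (∑ j ∈ Finset.Icc 1 w, P (a + j)) = ∑ j ∈ Finset.Icc 1 w, P (b + j) :=
    smul_right_injective (Fin M → ℝ) hne h
  rwa [icc_to_range, icc_to_range] at h2

lemma step_of_sums_eq {M : ℕ} (P : ℕ → Fin M → ℝ) {a n : ℕ}
    (h : ∑ j ∈ Finset.range n, P (a + 1 + j) = ∑ j ∈ Finset.range n, P (a + 1 + 1 + j)) :
    P (a + 1 + n) = P (a + 1) := by
  have e1 : ∑ j ∈ Finset.range (n+1), P (a + 1 + j)
      = (∑ j ∈ Finset.range n, P (a + 1 + j)) + P (a + 1 + n) :=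
    Finset.sum_range_succ _ _
  have e2 : ∑ j ∈ Finset.range (n+1), P (a + 1 + j)
      = (∑ j ∈ Finset.range n, P (a + 1 + 1 + j)) + P (a + 1) := by
    rw [Finset.sum_range_succ']
    congr 1
    exact Finset.sum_congr rfl fun j _ => by rw [show a + 1 + (j + 1) = a + 1 + 1 + j by omega]
  have := e1.symm.trans e2
  rw [h] at this
  exact add_left_cancel this

/-- **Lemma 2: mixture stability implies pointwise stability.**
Let `P : ℕ → (Fin M → ℝ)` be a sequence of probability mass functions on `M` answer
groups, `i ∈ ℕ` and `k ≥ 1`.  If `TV(P̄_i^{i+k}, P̄_{i+j}^{i+j+k}) = 0` for every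
`1 ≤ j ≤ k` and `TV(P̄_i^{i+k-1}, P̄_{i+j}^{i+j+k-1}) = 0` for every `1 ≤ j ≤ k-1`,
then `P j = P l` for all indices `j, l` with `i+1 ≤ j, l ≤ i+2k-1`. -/
theorem pointwise_stable_of_mixture_stable {M : ℕ} (P : ℕ → Fin M → ℝ)
    (hpos : ∀ n s, 0 ≤ P n s) (hsum : ∀ n, ∑ s, P n s = 1)
    (i k : ℕ) (hk : 1 ≤ k)
    (h1 : ∀ j, 1 ≤ j → j ≤ k → tvDist (windowMix P i k) (windowMix P (i + j) k) = 0)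
    (h2 : ∀ j, 1 ≤ j → j ≤ k - 1 →
      tvDist (windowMix P i (k - 1)) (windowMix P (i + j) (k - 1)) = 0) :
    ∀ j l, i + 1 ≤ j → j ≤ i + 2 * k - 1 → i + 1 ≤ l → l ≤ i + 2 * k - 1 →
      P j = P l := by
  -- sums over windows of width k are constant
  have S1 : ∀ j, j ≤ k →
      ∑ t ∈ Finset.range k, P (i + j + 1 + t) = ∑ t ∈ Finset.range k, P (i + 1 + t) := by
    intro j hj
    rcases Nat.eq_zero_or_pos j with rfl | hjpos
    · simp
    · exact (sums_eq_of_windowMix_eq P hk (tvDist_zero_eq (h1 j hjpos hj))).symm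
  have S2 : ∀ j, j ≤ k - 1 →
      ∑ t ∈ Finset.range (k-1), P (i + j + 1 + t)
        = ∑ t ∈ Finset.range (k-1), P (i + 1 + t) := by
    intro j hj
    rcases Nat.eq_zero_or_pos j with rfl | hjpos
    · simp
    · have hk1 : 1 ≤ k - 1 := le_trans hjpos hj
      exact (sums_eq_of_windowMix_eq P hk1 (tvDist_zero_eq (h2 j hjpos hj))).symm
  -- Step A: P (n + k) = P n for i+1 ≤ n ≤ i+k
  have A : ∀ n, i + 1 ≤ n → n ≤ i + k → P (n + k) = P n := by
    intro n hn1 hn2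
    set a := n - 1 with ha
    have han : n = a + 1 := by omega
    have h33 : ∑ t ∈ Finset.range k, P (a + 1 + t) = ∑ t ∈ Finset.range k, P (a + 1 + 1 + t) := by
      have e1 := S1 (a - i) (by omega)
      have e2 := S1 (a + 1 - i) (by omega)
      rw [show i + (a - i) + 1 = a + 1 by omega] at e1
      rw [show i + (a + 1 - i) + 1 = a + 1 + 1 by omega] at e2
      rw [e1, e2]
    have := step_of_sums_eq P h33
    rw [show a + 1 + k = n + k by omega, ← han] at this
    exact this
  -- Step B: P (n + (k-1)) = P n for i+1 ≤ n ≤ i+(k-1)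
  have B : ∀ n, i + 1 ≤ n → n ≤ i + (k - 1) → P (n + (k - 1)) = P n := by
    intro n hn1 hn2
    set a := n - 1 with ha
    have han : n = a + 1 := by omega
    have h33 : ∑ t ∈ Finset.range (k-1), P (a + 1 + t)
        = ∑ t ∈ Finset.range (k-1), P (a + 1 + 1 + t) := by
      have e1 := S2 (a - i) (by omega)
      have e2 := S2 (a + 1 - i) (by omega)
      rw [show i + (a - i) + 1 = a + 1 by omega] at e1
      rw [show i + (a + 1 - i) + 1 = a + 1 + 1 by omega] at e2
      rw [e1, e2]
    have := step_of_sums_eq P h33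
    rw [show a + 1 + (k - 1) = n + (k - 1) by omega, ← han] at this
    exact this
  -- constant block [i+k, i+2k-1]
  have C : ∀ d, d ≤ k - 1 → P (i + k + d) = P (i + k) := by
    intro d hd
    induction d with
    | zero => rfl
    | succ d ih =>
      have hd' : d ≤ k - 1 := by omega
      have hn : i + 1 ≤ i + d + 1 := by omega
      have hA := A (i + d + 1) hn (by omega)
      have hB := B (i + d + 1) hn (by omega)
      have : P (i + k + (d + 1)) = P (i + k + d) := by
        rw [show i + k + (d + 1) = i + d + 1 + k by omega, hA,
          ← hB, show i + d + 1 + (k - 1) = i + k + d by omega]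
      rw [this, ih hd']
  have D : ∀ n, i + 1 ≤ n → n ≤ i + 2 * k - 1 → P n = P (i + k) := by
    intro n hn1 hn2
    by_cases hcase : i + k ≤ n
    · have := C (n - (i + k)) (by omega)
      rwa [show i + k + (n - (i + k)) = n by omega] at this
    · have hA := A n hn1 (by omega)
      have : P (n + k) = P (i + k) := by
        have := C (n + k - (i + k)) (by omega)
        rwa [show i + k + (n + k - (i + k)) = n + k by omega] at this
      rw [← hA, this]
  intro j l hj1 hj2 hl1 hl2
  rw [D j hj1 hj2, D l hl1 hl2]
end

section
/- With the probe setup below, fix a start index l ∈ ℕ, a window length t ≥ 1, and ε > 0. Then μ( TV(P̄_l^{l+t}, P̂_l^{l+t}) ≥ ε ) ≤ 2^{M+1}·exp(−t·ε²/2), where the total variation distance is the supremum of |P̄_l^{l+t}(S) − P̂_l^{l+t}(S)| over all 2^M subsets S ⊆ Fin M. -/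
open scoped ENNReal
open Real


open MeasureTheory Finset

/-- Probe indicator: `Z^S_τ ω = 𝟙{Y τ ω ∈ S}`, as a real number. -/
noncomputable def probeZ {Ω : Type*} {M : ℕ} (Y : ℕ → Ω → Fin M)
    (S : Finset (Fin M)) (τ : ℕ) (ω : Ω) : ℝ :=
  if Y τ ω ∈ S then 1 else 0

/-- Conditional probability of the probe event given the past:
`p^S_τ = E[Z^S_τ ∣ 𝓕_{τ-1}]`. -/
noncomputable def probeP {Ω : Type*} {m0 : MeasurableSpace Ω} (μ : Measure Ω) {M : ℕ}
    (ℱ : Filtration ℕ m0) (Y : ℕ → Ω → Fin M) (S : Finset (Fin M)) (τ : ℕ) : Ω → ℝ :=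
  μ[probeZ Y S τ | ℱ (τ - 1)]

section aux
variable {Ω : Type*} {m0 : MeasurableSpace Ω} {μ : Measure Ω} [IsProbabilityMeasure μ]
  {ℱ : Filtration ℕ m0} {M : ℕ} {Y : ℕ → Ω → Fin M} {S : Finset (Fin M)}

lemma integrable_of_bdd {f : Ω → ℝ} (hf : AEStronglyMeasurable f μ) (C : ℝ)
    (h : ∀ᵐ ω ∂μ, |f ω| ≤ C) : Integrable f μ :=
  (integrable_const C).mono' hf (by simpa using h)

lemma probeZ_mem (τ : ℕ) (ω : Ω) : probeZ Y S τ ω = 0 ∨ probeZ Y S τ ω = 1 := by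
  unfold probeZ; split <;> simp

lemma probeZ_nonneg (τ : ℕ) (ω : Ω) : 0 ≤ probeZ Y S τ ω := by
  rcases probeZ_mem (S := S) τ ω with h | h <;> rw [h] <;> norm_num

lemma probeZ_le_one (τ : ℕ) (ω : Ω) : probeZ Y S τ ω ≤ 1 := by
  rcases probeZ_mem (S := S) τ ω with h | h <;> rw [h] <;> norm_num

lemma probeZ_sm (hY : ∀ τ, Measurable[ℱ τ] (Y τ)) (τ : ℕ) :
    StronglyMeasurable[ℱ τ] (probeZ Y S τ) := by
  have hset : MeasurableSet[ℱ τ] {ω | Y τ ω ∈ S} := hY τ (by trivial)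
  exact ((measurable_const.ite hset measurable_const :
    Measurable[ℱ τ] (probeZ Y S τ))).stronglyMeasurable

lemma probeZ_int (hY : ∀ τ, Measurable[ℱ τ] (Y τ)) (τ : ℕ) :
    Integrable (probeZ Y S τ) μ :=
  integrable_of_bdd (((probeZ_sm hY τ).mono (ℱ.le τ)).aestronglyMeasurable) 1
    (Filter.Eventually.of_forall fun ω => abs_le.2
      ⟨by linarith [probeZ_nonneg (Y := Y) (S := S) τ ω], probeZ_le_one τ ω⟩)

lemma probeP_sm (τ : ℕ) : StronglyMeasurable[ℱ (τ - 1)] (probeP μ ℱ Y S τ) :=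
  stronglyMeasurable_condExp

lemma probeP_int (τ : ℕ) : Integrable (probeP μ ℱ Y S τ) μ := integrable_condExp

lemma probeP_mem (hY : ∀ τ, Measurable[ℱ τ] (Y τ)) (τ : ℕ) :
    ∀ᵐ ω ∂μ, 0 ≤ probeP μ ℱ Y S τ ω ∧ probeP μ ℱ Y S τ ω ≤ 1 := by
  have h0 : ∀ᵐ ω ∂μ, 0 ≤ probeP μ ℱ Y S τ ω :=
    condExp_nonneg (Filter.Eventually.of_forall (probeZ_nonneg τ))
  have h1 : probeP μ ℱ Y S τ ≤ᵐ[μ] fun _ => (1 : ℝ) := by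
    have := condExp_mono (μ := μ) (m := ℱ (τ - 1)) (probeZ_int hY τ)
      (integrable_const (1 : ℝ))
      (Filter.Eventually.of_forall (probeZ_le_one (Y := Y) (S := S) τ))
    have hc := condExp_const (μ := μ) (ℱ.le (τ - 1)) (1 : ℝ)
    calc probeP μ ℱ Y S τ ≤ᵐ[μ] μ[(fun _ => (1:ℝ))|ℱ (τ-1)] := this
    _ = fun _ => (1:ℝ) := hc
  filter_upwards [h0, h1] with ω a b using ⟨a, b⟩

/-- conditional expectation of the increment vanishes -/
lemma condexp_inc (hY : ∀ τ, Measurable[ℱ τ] (Y τ)) (τ : ℕ) :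
    μ[fun ω => probeZ Y S τ ω - probeP μ ℱ Y S τ ω | ℱ (τ - 1)] =ᵐ[μ] 0 := by
  have h1 := condExp_sub (μ := μ) (m := ℱ (τ - 1)) (f := probeZ Y S τ)
    (g := probeP μ ℱ Y S τ) (probeZ_int hY τ) (probeP_int τ)
  have h2 : μ[probeP μ ℱ Y S τ | ℱ (τ - 1)] = probeP μ ℱ Y S τ :=
    condExp_of_stronglyMeasurable (ℱ.le _) (probeP_sm τ) (probeP_int τ)
  calc μ[fun ω => probeZ Y S τ ω - probeP μ ℱ Y S τ ω | ℱ (τ - 1)]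
      =ᵐ[μ] μ[probeZ Y S τ | ℱ (τ-1)] - μ[probeP μ ℱ Y S τ | ℱ (τ-1)] := h1
    _ =ᵐ[μ] 0 := by rw [h2]; filter_upwards with ω; simp [probeP]

/-- pointwise convexity bound -/
lemma exp_le_of_abs_le {s d : ℝ} (hd : |d| ≤ 1) :
    Real.exp (s * d) ≤ Real.cosh s + d * Real.sinh s := by
  rw [abs_le] at hd
  have ha : (0:ℝ) ≤ (1 + d) / 2 := by linarith
  have hb : (0:ℝ) ≤ (1 - d) / 2 := by linarith
  have hab : (1 + d) / 2 + (1 - d) / 2 = 1 := by ring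
  have := convexOn_exp.2 (Set.mem_univ s) (Set.mem_univ (-s)) ha hb hab
  simp only [smul_eq_mul] at this
  have heq : (1 + d) / 2 * s + (1 - d) / 2 * (-s) = s * d := by ring
  rw [heq] at this
  calc Real.exp (s * d) ≤ (1 + d) / 2 * Real.exp s + (1 - d) / 2 * Real.exp (-s) := this
    _ = Real.cosh s + d * Real.sinh s := by rw [Real.cosh_eq, Real.sinh_eq]; ring

/-- conditional MGF bound for one increment -/
lemma condexp_exp_le (hY : ∀ τ, Measurable[ℱ τ] (Y τ)) (τ : ℕ) (s : ℝ) :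
    μ[fun ω => Real.exp (s * (probeZ Y S τ ω - probeP μ ℱ Y S τ ω)) | ℱ (τ - 1)]
      ≤ᵐ[μ] fun _ => Real.exp (s ^ 2 / 2) := by
  set D : Ω → ℝ := fun ω => probeZ Y S τ ω - probeP μ ℱ Y S τ ω with hD
  have hDsm : AEStronglyMeasurable D μ :=
    (((probeZ_sm hY τ).mono (ℱ.le τ)).sub ((probeP_sm (μ := μ) (Y := Y) (S := S) τ).mono
      (ℱ.le _))).aestronglyMeasurable
  have hDbd : ∀ᵐ ω ∂μ, |D ω| ≤ 1 := by
    filter_upwards [probeP_mem hY τ] with ω hω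
    rw [abs_le]
    constructor
    · have := probeZ_nonneg (Y := Y) (S := S) τ ω; simp only [hD]; linarith [hω.2]
    · have := probeZ_le_one (Y := Y) (S := S) τ ω; simp only [hD]; linarith [hω.1]
  have hDint : Integrable D μ := integrable_of_bdd hDsm 1 hDbd
  have hexpint : Integrable (fun ω => Real.exp (s * D ω)) μ := by
    refine integrable_of_bdd (Real.continuous_exp.comp_aestronglyMeasurable (hDsm.const_mul s)) (Real.exp |s|) ?_
    filter_upwards [hDbd] with ω hω
    rw [abs_of_pos (Real.exp_pos _)]
    refine Real.exp_le_exp.2 ?_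
    calc s * D ω ≤ |s * D ω| := le_abs_self _
      _ = |s| * |D ω| := abs_mul _ _
      _ ≤ |s| * 1 := by gcongr
      _ = |s| := mul_one _
  have hrhsint : Integrable (fun ω => Real.cosh s + D ω * Real.sinh s) μ :=
    (integrable_const _).add (hDint.mul_const _)
  have hmono := condExp_mono (μ := μ) (m := ℱ (τ - 1)) hexpint hrhsint
    (by filter_upwards [hDbd] with ω hω using exp_le_of_abs_le hω)
  have hrhs : μ[fun ω => Real.cosh s + D ω * Real.sinh s | ℱ (τ - 1)]
      =ᵐ[μ] fun _ => Real.cosh s := by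
    have h1 := condExp_add (μ := μ) (m := ℱ (τ - 1)) (integrable_const (Real.cosh s))
      (hDint.mul_const (Real.sinh s))
    have h2 : (fun ω => D ω * Real.sinh s) = Real.sinh s • D := by
      funext ω; simp [mul_comm]
    have h3 := condExp_smul (μ := μ) (m := ℱ (τ - 1)) (Real.sinh s) D
    have h4 := condexp_inc (μ := μ) (S := S) hY τ
    have h5 := condExp_const (μ := μ) (ℱ.le (τ - 1)) (Real.cosh s)
    calc μ[fun ω => Real.cosh s + D ω * Real.sinh s | ℱ (τ - 1)]
        =ᵐ[μ] μ[(fun _ => Real.cosh s)|ℱ (τ-1)] + μ[(fun ω => D ω * Real.sinh s)|ℱ (τ-1)] := h1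
      _ =ᵐ[μ] fun _ => Real.cosh s := by
          rw [h2, h5]
          filter_upwards [h3, h4] with ω hω3 hω4
          simp only [Pi.add_apply, Pi.smul_apply, smul_eq_mul] at *
          rw [hω3, hω4]; simp
  calc μ[fun ω => Real.exp (s * D ω) | ℱ (τ - 1)]
      ≤ᵐ[μ] μ[fun ω => Real.cosh s + D ω * Real.sinh s | ℱ (τ - 1)] := hmono
    _ =ᵐ[μ] fun _ => Real.cosh s := hrhs
    _ ≤ᵐ[μ] fun _ => Real.exp (s ^ 2 / 2) :=
        Filter.Eventually.of_forall fun _ => Real.cosh_le_exp_half_sq s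

lemma Fsum_sm (hY : ∀ τ, Measurable[ℱ τ] (Y τ)) (l n : ℕ) :
    StronglyMeasurable[ℱ (l + n)]
      (fun ω => ∑ τ ∈ Icc (l + 1) (l + n), (probeZ Y S τ ω - probeP μ ℱ Y S τ ω)) := by
  refine Finset.stronglyMeasurable_fun_sum _ fun τ hτ => ?_
  have hτle : τ ≤ l + n := (Finset.mem_Icc.1 hτ).2
  exact ((probeZ_sm hY τ).mono (ℱ.mono hτle)).sub
    ((probeP_sm (μ := μ) (Y := Y) (S := S) τ).mono (ℱ.mono ((Nat.sub_le τ 1).trans hτle)))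

lemma Fsum_bd (hY : ∀ τ, Measurable[ℱ τ] (Y τ)) (l n : ℕ) :
    ∀ᵐ ω ∂μ, |∑ τ ∈ Icc (l + 1) (l + n), (probeZ Y S τ ω - probeP μ ℱ Y S τ ω)| ≤ 2 * n := by
  have hall : ∀ᵐ ω ∂μ, ∀ τ, 0 ≤ probeP μ ℱ Y S τ ω ∧ probeP μ ℱ Y S τ ω ≤ 1 :=
    ae_all_iff.2 (probeP_mem hY)
  filter_upwards [hall] with ω hω
  calc |∑ τ ∈ Icc (l + 1) (l + n), (probeZ Y S τ ω - probeP μ ℱ Y S τ ω)|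
      ≤ ∑ τ ∈ Icc (l + 1) (l + n), |probeZ Y S τ ω - probeP μ ℱ Y S τ ω| :=
        Finset.abs_sum_le_sum_abs _ _
    _ ≤ ∑ τ ∈ Icc (l + 1) (l + n), 2 := by
        refine Finset.sum_le_sum fun τ _ => ?_
        rw [abs_le]
        have h0 := probeZ_nonneg (Y := Y) (S := S) τ ω
        have h1 := probeZ_le_one (Y := Y) (S := S) τ ω
        constructor <;> [linarith [(hω τ).2]; linarith [(hω τ).1]]
    _ ≤ 2 * n := by
        rw [Finset.sum_const, Nat.card_Icc]
        simp only [nsmul_eq_mul]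
        have : l + n + 1 - (l + 1) = n := by omega
        rw [this, mul_comm]

lemma Fsum_int (hY : ∀ τ, Measurable[ℱ τ] (Y τ)) (l n : ℕ) (s : ℝ) :
    Integrable (fun ω => Real.exp (s * ∑ τ ∈ Icc (l + 1) (l + n),
      (probeZ Y S τ ω - probeP μ ℱ Y S τ ω))) μ := by
  refine integrable_of_bdd (Real.continuous_exp.comp_aestronglyMeasurable
    ((((Fsum_sm hY l n).mono (ℱ.le _)).aestronglyMeasurable).const_mul s))
    (Real.exp (|s| * (2 * n))) ?_
  filter_upwards [Fsum_bd (μ := μ) hY l n] with ω hω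
  rw [abs_of_pos (Real.exp_pos _)]
  refine Real.exp_le_exp.2 ?_
  calc s * _ ≤ |s * _| := le_abs_self _
    _ = |s| * _ := abs_mul _ _
    _ ≤ |s| * (2 * n) := by gcongr

lemma mgf_sum (hY : ∀ τ, Measurable[ℱ τ] (Y τ)) (l : ℕ) (s : ℝ) : ∀ n : ℕ,
    ∫ ω, Real.exp (s * ∑ τ ∈ Icc (l + 1) (l + n),
      (probeZ Y S τ ω - probeP μ ℱ Y S τ ω)) ∂μ ≤ Real.exp (n * (s ^ 2 / 2)) := by
  intro n
  induction n with
  | zero =>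
    simp only [Nat.add_zero, Nat.cast_zero, zero_mul, Real.exp_zero]
    have : Icc (l + 1) (l + 0) = (∅ : Finset ℕ) := by
      rw [Finset.Icc_eq_empty_iff]; omega
    simp [this]
  | succ n ih =>
    set m := ℱ (l + n) with hm
    set f : Ω → ℝ := fun ω => Real.exp (s * ∑ τ ∈ Icc (l + 1) (l + n),
      (probeZ Y S τ ω - probeP μ ℱ Y S τ ω)) with hf
    set g : Ω → ℝ := fun ω => Real.exp (s * (probeZ Y S (l + n + 1) ω
      - probeP μ ℱ Y S (l + n + 1) ω)) with hg
    have hsplit : (fun ω => Real.exp (s * ∑ τ ∈ Icc (l + 1) (l + (n + 1)),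
        (probeZ Y S τ ω - probeP μ ℱ Y S τ ω))) = f * g := by
      funext ω
      have : l + (n + 1) = (l + n) + 1 := by ring
      rw [this, Finset.sum_Icc_succ_top (by omega), mul_add, Real.exp_add]
      rfl
    have hfsm : StronglyMeasurable[m] f :=
      (Real.continuous_exp.comp_stronglyMeasurable ((Fsum_sm hY l n).const_mul s))
    have hfbd : ∀ᵐ ω ∂μ, ‖f ω‖ ≤ Real.exp (|s| * (2 * n)) := by
      filter_upwards [Fsum_bd (μ := μ) hY l n] with ω hω
      rw [Real.norm_eq_abs, abs_of_pos (Real.exp_pos _)]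
      refine Real.exp_le_exp.2 ?_
      calc s * _ ≤ |s * _| := le_abs_self _
        _ = |s| * _ := abs_mul _ _
        _ ≤ |s| * (2 * n) := by gcongr
    have hfint : Integrable f μ := Fsum_int hY l n s
    have hgint : Integrable g μ := by
      have := Fsum_int (μ := μ) (S := S) hY (l + n) 1 s
      simpa using this
    have hfgint : Integrable (f * g) μ := by
      rw [← hsplit]; exact Fsum_int hY l (n + 1) s
    have hpull : μ[f * g | m] =ᵐ[μ] f * μ[g | m] :=
      condExp_stronglyMeasurable_mul_of_bound (ℱ.le _) hfsm hgint _ hfbd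
    have hgce : μ[g | m] ≤ᵐ[μ] fun _ => Real.exp (s ^ 2 / 2) := by
      have := condexp_exp_le (μ := μ) (S := S) hY (l + n + 1) s
      simpa using this
    have hkey : μ[f * g | m] ≤ᵐ[μ] fun ω => f ω * Real.exp (s ^ 2 / 2) := by
      filter_upwards [hpull, hgce] with ω h1 h2
      rw [h1]
      exact mul_le_mul_of_nonneg_left h2 (Real.exp_pos _).le
    calc ∫ ω, Real.exp (s * ∑ τ ∈ Icc (l + 1) (l + (n + 1)),
          (probeZ Y S τ ω - probeP μ ℱ Y S τ ω)) ∂μ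
        = ∫ ω, (f * g) ω ∂μ := by rw [hsplit]
      _ = ∫ ω, (μ[f * g | m]) ω ∂μ := (integral_condExp (ℱ.le _)).symm
      _ ≤ ∫ ω, f ω * Real.exp (s ^ 2 / 2) ∂μ :=
          integral_mono_ae integrable_condExp (hfint.mul_const _) hkey
      _ = (∫ ω, f ω ∂μ) * Real.exp (s ^ 2 / 2) := integral_mul_const _ _
      _ ≤ Real.exp (n * (s ^ 2 / 2)) * Real.exp (s ^ 2 / 2) := by
          refine mul_le_mul_of_nonneg_right ih (Real.exp_pos _).le
      _ = Real.exp ((n + 1 : ℕ) * (s ^ 2 / 2)) := by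
          rw [← Real.exp_add]; push_cast; ring_nf

end aux


/-- Empirical mixture: `P̂_l^{l+t}(S) = (1/t) ∑_{τ=l+1}^{l+t} Z^S_τ`. -/
noncomputable def empMix {Ω : Type*} {M : ℕ} (Y : ℕ → Ω → Fin M)
    (l t : ℕ) (S : Finset (Fin M)) (ω : Ω) : ℝ :=
  (1 / (t : ℝ)) * ∑ τ ∈ Icc (l + 1) (l + t), probeZ Y S τ ω

/-- True mixture: `P̄_l^{l+t}(S) = (1/t) ∑_{τ=l+1}^{l+t} p^S_τ`. -/
noncomputable def trueMix {Ω : Type*} {m0 : MeasurableSpace Ω} (μ : Measure Ω) {M : ℕ}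
    (ℱ : Filtration ℕ m0) (Y : ℕ → Ω → Fin M)
    (l t : ℕ) (S : Finset (Fin M)) (ω : Ω) : ℝ :=
  (1 / (t : ℝ)) * ∑ τ ∈ Icc (l + 1) (l + t), probeP μ ℱ Y S τ ω

/-- Total variation distance between the true and the empirical mixture, as the
supremum over all `2^M` subsets `S ⊆ Fin M` of `|P̄_l^{l+t}(S) − P̂_l^{l+t}(S)|`. -/
noncomputable def tvMix {Ω : Type*} {m0 : MeasurableSpace Ω} (μ : Measure Ω) {M : ℕ}
    (ℱ : Filtration ℕ m0) (Y : ℕ → Ω → Fin M) (l t : ℕ) (ω : Ω) : ℝ :=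
  ⨆ S : Finset (Fin M), |trueMix μ ℱ Y l t S ω - empMix Y l t S ω|

section aux2
variable {Ω : Type*} {m0 : MeasurableSpace Ω} {μ : Measure Ω} [IsProbabilityMeasure μ]
  {ℱ : Filtration ℕ m0} {M : ℕ} {Y : ℕ → Ω → Fin M} {S : Finset (Fin M)}

lemma tail_bound (hY : ∀ τ, Measurable[ℱ τ] (Y τ)) (l t : ℕ) {ε : ℝ} (hε : 0 < ε)
    (σ : ℝ) (hσ : σ = 1 ∨ σ = -1) :
    μ {ω | (t : ℝ) * ε ≤ σ * ∑ τ ∈ Icc (l + 1) (l + t),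
        (probeZ Y S τ ω - probeP μ ℱ Y S τ ω)} ≤
      ENNReal.ofReal (Real.exp (-(t : ℝ) * ε ^ 2 / 2)) := by
  set F : Ω → ℝ := fun ω => ∑ τ ∈ Icc (l + 1) (l + t),
    (probeZ Y S τ ω - probeP μ ℱ Y S τ ω) with hF
  have hσ2 : σ ^ 2 = 1 := by rcases hσ with h | h <;> rw [h] <;> norm_num
  set s : ℝ := σ * ε with hs
  have hint : Integrable (fun ω => Real.exp (s * F ω)) μ := Fsum_int hY l t s
  have hnn : 0 ≤ᵐ[μ] fun ω => Real.exp (s * F ω) :=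
    Filter.Eventually.of_forall fun ω => (Real.exp_pos _).le
  have hmgf : ∫ ω, Real.exp (s * F ω) ∂μ ≤ Real.exp ((t : ℝ) * (ε ^ 2 / 2)) := by
    have := mgf_sum (μ := μ) (S := S) hY l s t
    have hs2 : s ^ 2 = ε ^ 2 := by rw [hs, mul_pow, hσ2, one_mul]
    rwa [hs2] at this
  set a : ℝ := Real.exp ((t : ℝ) * ε ^ 2) with ha
  have hsub : {ω | (t : ℝ) * ε ≤ σ * F ω} ⊆ {ω | a ≤ Real.exp (s * F ω)} := by
    intro ω hω
    simp only [Set.mem_setOf_eq] at hω ⊢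
    rw [ha]
    refine Real.exp_le_exp.2 ?_
    have : s * F ω = ε * (σ * F ω) := by rw [hs]; ring
    rw [this]
    calc (t : ℝ) * ε ^ 2 = ε * ((t : ℝ) * ε) := by ring
      _ ≤ ε * (σ * F ω) := by gcongr
  have hmark := mul_meas_ge_le_integral_of_nonneg hnn hint a
  have ha0 : 0 < a := Real.exp_pos _
  have htoReal : (μ {ω | a ≤ Real.exp (s * F ω)}).toReal ≤
      Real.exp (-(t : ℝ) * ε ^ 2 / 2) := by
    have h1 : (μ {ω | a ≤ Real.exp (s * F ω)}).toReal ≤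
        Real.exp ((t : ℝ) * (ε ^ 2 / 2)) / a :=
      (le_div_iff₀' ha0).2 (hmark.trans hmgf)
    refine h1.trans ?_
    rw [ha, ← Real.exp_sub]
    refine Real.exp_le_exp.2 (le_of_eq ?_)
    ring
  calc μ {ω | (t : ℝ) * ε ≤ σ * F ω} ≤ μ {ω | a ≤ Real.exp (s * F ω)} := measure_mono hsub
    _ = ENNReal.ofReal ((μ {ω | a ≤ Real.exp (s * F ω)}).toReal) :=
        (ENNReal.ofReal_toReal (measure_ne_top _ _)).symm
    _ ≤ ENNReal.ofReal (Real.exp (-(t : ℝ) * ε ^ 2 / 2)) := ENNReal.ofReal_le_ofReal htoReal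

lemma perS_bound (hY : ∀ τ, Measurable[ℱ τ] (Y τ)) (l t : ℕ) (ht : 1 ≤ t) {ε : ℝ}
    (hε : 0 < ε) (S : Finset (Fin M)) :
    μ {ω | ε ≤ |trueMix μ ℱ Y l t S ω - empMix Y l t S ω|} ≤
      2 * ENNReal.ofReal (Real.exp (-(t : ℝ) * ε ^ 2 / 2)) := by
  set F : Ω → ℝ := fun ω => ∑ τ ∈ Icc (l + 1) (l + t),
    (probeZ Y S τ ω - probeP μ ℱ Y S τ ω) with hF
  have ht0 : (0 : ℝ) < t := by exact_mod_cast ht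
  have hdiff : ∀ ω, trueMix μ ℱ Y l t S ω - empMix Y l t S ω = (1 / (t : ℝ)) * (-(F ω)) := by
    intro ω
    rw [trueMix, empMix, hF]
    rw [← mul_sub, ← Finset.sum_sub_distrib]
    congr 1
    rw [← Finset.sum_neg_distrib]
    exact Finset.sum_congr rfl fun τ _ => by ring
  have hsub : {ω | ε ≤ |trueMix μ ℱ Y l t S ω - empMix Y l t S ω|} ⊆
      {ω | (t : ℝ) * ε ≤ 1 * F ω} ∪ {ω | (t : ℝ) * ε ≤ (-1) * F ω} := by
    intro ω hω
    simp only [Set.mem_setOf_eq] at hω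
    rw [hdiff ω, abs_mul, abs_neg, abs_of_pos (by positivity : (0:ℝ) < 1 / (t:ℝ))] at hω
    have habs : (t : ℝ) * ε ≤ |F ω| := by
      rw [div_mul_eq_mul_div, le_div_iff₀ ht0, mul_comm ε] at hω
      · linarith [hω]
    rcases le_abs.1 habs with h | h
    · exact Or.inl (by simpa using h)
    · exact Or.inr (by simp only [Set.mem_setOf_eq, neg_one_mul]; exact h)
  calc μ {ω | ε ≤ |trueMix μ ℱ Y l t S ω - empMix Y l t S ω|}
      ≤ μ ({ω | (t : ℝ) * ε ≤ 1 * F ω} ∪ {ω | (t : ℝ) * ε ≤ (-1) * F ω}) := measure_mono hsub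
    _ ≤ μ {ω | (t : ℝ) * ε ≤ 1 * F ω} + μ {ω | (t : ℝ) * ε ≤ (-1) * F ω} := measure_union_le _ _
    _ ≤ ENNReal.ofReal (Real.exp (-(t : ℝ) * ε ^ 2 / 2)) +
        ENNReal.ofReal (Real.exp (-(t : ℝ) * ε ^ 2 / 2)) :=
        add_le_add (tail_bound hY l t hε 1 (Or.inl rfl)) (tail_bound hY l t hε (-1) (Or.inr rfl))
    _ = 2 * ENNReal.ofReal (Real.exp (-(t : ℝ) * ε ^ 2 / 2)) := by rw [two_mul]

end aux2

/-- **Union bound over all subsets.**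
On a probability space with filtration `ℱ` and adapted probes `Y τ : Ω → Fin M`,
fix a start index `l`, a window length `t ≥ 1` and `ε > 0`.  Then
`μ( TV(P̄_l^{l+t}, P̂_l^{l+t}) ≥ ε ) ≤ 2^{M+1} exp(−t ε² / 2)`. -/
theorem probe_concentration_tv {Ω : Type*} {m0 : MeasurableSpace Ω}
    (μ : Measure Ω) [IsProbabilityMeasure μ] (ℱ : Filtration ℕ m0)
    {M : ℕ} (hM : 1 ≤ M) (Y : ℕ → Ω → Fin M)
    (hY : ∀ τ, Measurable[ℱ τ] (Y τ))
    (l t : ℕ) (ht : 1 ≤ t) {ε : ℝ} (hε : 0 < ε) :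
    μ {ω | ε ≤ tvMix μ ℱ Y l t ω} ≤
      ENNReal.ofReal (2 ^ (M + 1) * Real.exp (-(t : ℝ) * ε ^ 2 / 2)) :=  by
  have hsub : {ω | ε ≤ tvMix μ ℱ Y l t ω} ⊆
      ⋃ S : Finset (Fin M), {ω | ε ≤ |trueMix μ ℱ Y l t S ω - empMix Y l t S ω|} := by
    intro ω hω
    simp only [Set.mem_setOf_eq, tvMix] at hω
    obtain ⟨S, hS⟩ := exists_eq_ciSup_of_finite
      (f := fun S : Finset (Fin M) => |trueMix μ ℱ Y l t S ω - empMix Y l t S ω|)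
    exact Set.mem_iUnion.2 ⟨S, by simp only [Set.mem_setOf_eq]; rw [hS]; exact hω⟩
  calc μ {ω | ε ≤ tvMix μ ℱ Y l t ω}
      ≤ μ (⋃ S : Finset (Fin M), {ω | ε ≤ |trueMix μ ℱ Y l t S ω - empMix Y l t S ω|}) :=
        measure_mono hsub
    _ ≤ ∑ S : Finset (Fin M), μ {ω | ε ≤ |trueMix μ ℱ Y l t S ω - empMix Y l t S ω|} :=
        measure_iUnion_fintype_le _ _
    _ ≤ ∑ _S : Finset (Fin M), 2 * ENNReal.ofReal (Real.exp (-(t : ℝ) * ε ^ 2 / 2)) :=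
        Finset.sum_le_sum fun S _ => perS_bound hY l t ht hε S
    _ = (Fintype.card (Finset (Fin M)) : ℝ≥0∞) *
        (2 * ENNReal.ofReal (Real.exp (-(t : ℝ) * ε ^ 2 / 2))) := by
        rw [Finset.sum_const, Finset.card_univ, nsmul_eq_mul]
    _ = ENNReal.ofReal (2 ^ (M + 1) * Real.exp (-(t : ℝ) * ε ^ 2 / 2)) := by
        rw [Fintype.card_finset, Fintype.card_fin]
        rw [ENNReal.ofReal_mul (by positivity)]
        rw [show ((2:ℝ)^(M+1)) = 2^M * 2 by ring]
        rw [ENNReal.ofReal_mul (by positivity), ENNReal.ofReal_pow (by norm_num)]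
        rw [ENNReal.ofReal_ofNat]
        push_cast
        ring
end

section
/- With the probe setup below, fix i ∈ ℕ, k ≥ 2, and ε > 0. Then the probability that TV(P̄_l^{l+t}, P̂_l^{l+t}) ≥ ε for some start index l ∈ {i+1, …, i+k} and some window length t ∈ {k−1, k} is at most ∑_{l=i+1}^{i+k} ∑_{t∈{k−1,k}} μ( TV(P̄_l^{l+t}, P̂_l^{l+t}) ≥ ε ) ≤ 2^{M+2}·k·exp(−(k−1)·ε²/2). -/
open MeasureTheory Finset

lemma exp_mul_le_of_abs_le {c x : ℝ} (hx : |x| ≤ 1) :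
    Real.exp (c * x) ≤ Real.cosh c + x * Real.sinh c := by
  obtain ⟨h1, h2⟩ := abs_le.mp hx
  have h := convexOn_exp.2 (Set.mem_univ (-c)) (Set.mem_univ c)
      (show (0:ℝ) ≤ (1 - x) / 2 by linarith) (show (0:ℝ) ≤ (1 + x) / 2 by linarith)
      (show (1 - x) / 2 + (1 + x) / 2 = 1 by ring)
  simp only [smul_eq_mul] at h
  calc Real.exp (c * x) = Real.exp ((1 - x) / 2 * -c + (1 + x) / 2 * c) := by ring_nf
    _ ≤ (1 - x) / 2 * Real.exp (-c) + (1 + x) / 2 * Real.exp c := h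
    _ = Real.cosh c + x * Real.sinh c := by rw [Real.cosh_eq, Real.sinh_eq]; ring

lemma mgf_sum_le {Ω : Type*} {m0 : MeasurableSpace Ω} {μ : Measure Ω}
    [IsProbabilityMeasure μ] {ℱ : Filtration ℕ m0} {d : ℕ → Ω → ℝ}
    (hadp : ∀ τ, StronglyMeasurable[ℱ τ] (d τ))
    (hbd : ∀ τ, ∀ᵐ ω ∂μ, |d τ ω| ≤ 1)
    (hmart : ∀ τ, μ[d τ | ℱ (τ - 1)] =ᵐ[μ] 0)
    (l : ℕ) (c : ℝ) (n : ℕ) :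
    Integrable (fun ω => Real.exp (c * ∑ τ ∈ Icc (l + 1) (l + n), d τ ω)) μ ∧
    ∫ ω, Real.exp (c * ∑ τ ∈ Icc (l + 1) (l + n), d τ ω) ∂μ ≤ Real.cosh c ^ n := by
  have hdint : ∀ τ, Integrable (d τ) μ := fun τ =>
    (integrable_const (1:ℝ)).mono' ((hadp τ).mono (ℱ.le τ)).aestronglyMeasurable
      (by filter_upwards [hbd τ] with ω h using by simpa using h)
  induction n with
  | zero =>
      simp only [Nat.add_zero]
      rw [Finset.Icc_eq_empty (by omega)]
      simp only [Finset.sum_empty, mul_zero, Real.exp_zero, pow_zero]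
      exact ⟨integrable_const 1, by simp⟩
  | succ n ih =>
      set F : Ω → ℝ := fun ω => ∑ τ ∈ Icc (l + 1) (l + n), d τ ω with hF
      set τ0 : ℕ := l + n + 1 with hτ0
      have hsplit : ∀ ω, ∑ τ ∈ Icc (l + 1) (l + (n + 1)), d τ ω = F ω + d τ0 ω := by
        intro ω
        rw [show l + (n + 1) = (l + n) + 1 by ring]
        exact Finset.sum_Icc_succ_top (by omega) _
      set G : Ω → ℝ := fun ω => Real.exp (c * F ω) with hG
      set e : Ω → ℝ := fun ω => Real.exp (c * d τ0 ω) with he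
      have hfun : (fun ω => Real.exp (c * ∑ τ ∈ Icc (l + 1) (l + (n + 1)), d τ ω))
          = fun ω => G ω * e ω := by
        funext ω; rw [hsplit ω, mul_add, Real.exp_add]
      -- measurability
      have hFm : StronglyMeasurable[ℱ (l + n)] F :=
        Finset.stronglyMeasurable_fun_sum _ fun τ hτ =>
          (hadp τ).mono (ℱ.mono (by simp only [Finset.mem_Icc] at hτ; omega))
      have hGm : StronglyMeasurable[ℱ (l + n)] G :=
        Real.continuous_exp.comp_stronglyMeasurable (hFm.const_mul c)
      have hGae : AEStronglyMeasurable G μ := (hGm.mono (ℱ.le _)).aestronglyMeasurable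
      have heae : AEStronglyMeasurable e μ :=
        (Real.continuous_exp.comp_stronglyMeasurable
          (((hadp τ0).mono (ℱ.le τ0)).const_mul c)).aestronglyMeasurable
      -- bounds
      have hFbd : ∀ᵐ ω ∂μ, |F ω| ≤ (n : ℝ) := by
        filter_upwards [ae_all_iff.2 hbd] with ω hω
        calc |F ω| ≤ ∑ τ ∈ Icc (l + 1) (l + n), |d τ ω| := Finset.abs_sum_le_sum_abs _ _
          _ ≤ ∑ _τ ∈ Icc (l + 1) (l + n), (1:ℝ) := Finset.sum_le_sum fun τ _ => hω τ
          _ = (n : ℝ) := by rw [Finset.sum_const, Nat.card_Icc]; simp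
      have hGbd : ∀ᵐ ω ∂μ, ‖G ω‖ ≤ Real.exp (|c| * n) := by
        filter_upwards [hFbd] with ω h
        rw [Real.norm_eq_abs, Real.abs_exp]
        exact Real.exp_le_exp.2 ((le_abs_self _).trans (by
          rw [abs_mul]; exact mul_le_mul_of_nonneg_left h (abs_nonneg c)))
      have hebd : ∀ᵐ ω ∂μ, ‖e ω‖ ≤ Real.exp |c| := by
        filter_upwards [hbd τ0] with ω h
        rw [Real.norm_eq_abs, Real.abs_exp]
        exact Real.exp_le_exp.2 ((le_abs_self _).trans (by
          rw [abs_mul]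
          calc |c| * |d τ0 ω| ≤ |c| * 1 := mul_le_mul_of_nonneg_left h (abs_nonneg c)
            _ = |c| := mul_one _))
      -- integrability
      have hGint : Integrable G μ := (integrable_const _).mono' hGae hGbd
      have heint : Integrable e μ := (integrable_const _).mono' heae hebd
      have hGeint : Integrable (G * e) μ := by
        refine (integrable_const (Real.exp (|c| * n) * Real.exp |c|)).mono'
          (hGae.mul heae) ?_
        filter_upwards [hGbd, hebd] with ω h1 h2
        calc ‖G ω * e ω‖ = ‖G ω‖ * ‖e ω‖ := norm_mul _ _
          _ ≤ Real.exp (|c| * n) * Real.exp |c| :=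
            mul_le_mul h1 h2 (norm_nonneg _) (Real.exp_nonneg _)
      -- conditional expectation computation
      have hproj : μ[G * e | ℱ (l + n)] =ᵐ[μ] G * μ[e | ℱ (l + n)] :=
        condExp_mul_of_stronglyMeasurable_left hGm hGeint heint
      have hce : μ[e | ℱ (l + n)] ≤ᵐ[μ] fun _ => Real.cosh c := by
        have h1 : e ≤ᵐ[μ] fun ω => Real.cosh c + d τ0 ω * Real.sinh c := by
          filter_upwards [hbd τ0] with ω h using exp_mul_le_of_abs_le h
        have hrhs : Integrable (fun ω => Real.cosh c + d τ0 ω * Real.sinh c) μ :=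
          (integrable_const _).add ((hdint τ0).mul_const _)
        have h2 : (fun ω => Real.cosh c + d τ0 ω * Real.sinh c)
            = (fun _ => Real.cosh c) + (Real.sinh c) • d τ0 := by
          funext ω; simp [mul_comm]
        have h3 : μ[(fun _ => Real.cosh c) + (Real.sinh c) • d τ0 | ℱ (l + n)]
            =ᵐ[μ] fun _ => Real.cosh c := by
          refine (condExp_add (integrable_const _) ((hdint τ0).smul _) _).trans ?_
          have hc : μ[(fun _ => Real.cosh c) | ℱ (l + n)] = fun _ => Real.cosh c :=
            condExp_const (ℱ.le _) _
          have hs : μ[(Real.sinh c) • d τ0 | ℱ (l + n)] =ᵐ[μ] 0 := by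
            refine (condExp_smul (Real.sinh c) (d τ0) _).trans ?_
            have := hmart τ0
            rw [hτ0, Nat.add_sub_cancel] at this
            filter_upwards [this] with ω hω
            simp [hτ0, hω]
          filter_upwards [hs] with ω hω
          simp only [Pi.add_apply, hc, hω, Pi.zero_apply, add_zero]
        exact (condExp_mono heint (h2 ▸ hrhs) (h2 ▸ h1)).trans h3.le
      rw [hfun]
      constructor
      · exact hGeint
      · have hint1 : Integrable (G * μ[e | ℱ (l + n)]) μ := integrable_condExp.congr hproj
        calc ∫ ω, G ω * e ω ∂μ = ∫ ω, (μ[G * e | ℱ (l + n)]) ω ∂μ :=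
              (integral_condExp (ℱ.le _)).symm
          _ = ∫ ω, G ω * (μ[e | ℱ (l + n)]) ω ∂μ := integral_congr_ae hproj
          _ ≤ ∫ ω, G ω * Real.cosh c ∂μ := by
              refine integral_mono_ae hint1 (hGint.mul_const _) ?_
              filter_upwards [hce] with ω hω
              exact mul_le_mul_of_nonneg_left hω (Real.exp_nonneg _)
          _ = (∫ ω, G ω ∂μ) * Real.cosh c := integral_mul_const _ _
          _ ≤ Real.cosh c ^ n * Real.cosh c :=
              mul_le_mul_of_nonneg_right (ih).2 (Real.cosh_pos c).le
          _ = Real.cosh c ^ (n + 1) := (pow_succ _ _).symm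

lemma chernoff_aux {Ω : Type*} {m0 : MeasurableSpace Ω} {μ : Measure Ω}
    [IsProbabilityMeasure μ] {W : Ω → ℝ} {n : ℕ} {ε : ℝ} (hε : 0 < ε)
    (hint : Integrable (fun ω => Real.exp (ε * W ω)) μ)
    (hmgf : ∫ ω, Real.exp (ε * W ω) ∂μ ≤ Real.cosh ε ^ n) :
    μ {ω | (n : ℝ) * ε ≤ W ω} ≤ ENNReal.ofReal (Real.exp (-(n : ℝ) * ε ^ 2 / 2)) := by
  have h := ProbabilityTheory.measure_ge_le_exp_mul_mgf (X := W) (μ := μ) (t := ε)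
    ((n : ℝ) * ε) hε.le hint
  have hm : ProbabilityTheory.mgf W μ ε ≤ Real.exp ((n : ℝ) * (ε ^ 2 / 2)) := by
    calc ProbabilityTheory.mgf W μ ε ≤ Real.cosh ε ^ n := hmgf
      _ ≤ Real.exp (ε ^ 2 / 2) ^ n :=
          pow_le_pow_left₀ (Real.cosh_pos ε).le (Real.cosh_le_exp_half_sq ε) n
      _ = Real.exp ((n : ℝ) * (ε ^ 2 / 2)) := by
          rw [← Real.exp_nat_mul]
  rw [← ENNReal.ofReal_toReal (measure_ne_top μ _)]
  refine ENNReal.ofReal_le_ofReal ?_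
  calc (μ {ω | (n : ℝ) * ε ≤ W ω}).toReal
      ≤ Real.exp (-ε * ((n : ℝ) * ε)) * ProbabilityTheory.mgf W μ ε := h
    _ ≤ Real.exp (-ε * ((n : ℝ) * ε)) * Real.exp ((n : ℝ) * (ε ^ 2 / 2)) :=
        mul_le_mul_of_nonneg_left hm (Real.exp_nonneg _)
    _ = Real.exp (-(n : ℝ) * ε ^ 2 / 2) := by rw [← Real.exp_add]; congr 1; ring


lemma probe_single {Ω : Type*} {m0 : MeasurableSpace Ω}
    (μ : Measure Ω) [IsProbabilityMeasure μ] (ℱ : Filtration ℕ m0)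
    {M : ℕ} (Y : ℕ → Ω → Fin M) (hY : ∀ τ, Measurable[ℱ τ] (Y τ))
    (S : Finset (Fin M)) (l t : ℕ) (ht : 1 ≤ t) {ε : ℝ} (hε : 0 < ε) :
    μ {ω | ε ≤ |trueMix μ ℱ Y l t S ω - empMix Y l t S ω|} ≤
      ENNReal.ofReal (2 * Real.exp (-(t : ℝ) * ε ^ 2 / 2)) := by
  set d : ℕ → Ω → ℝ := fun τ ω => probeZ Y S τ ω - probeP μ ℱ Y S τ ω with hd
  have hZm : ∀ τ, StronglyMeasurable[ℱ τ] (probeZ Y S τ) := fun τ =>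
    (Measurable.ite ((hY τ) S.measurableSet) measurable_const
      measurable_const).stronglyMeasurable
  have hZ01 : ∀ τ ω, 0 ≤ probeZ Y S τ ω ∧ probeZ Y S τ ω ≤ 1 := fun τ ω => by
    unfold probeZ; split <;> norm_num
  have hZint : ∀ τ, Integrable (probeZ Y S τ) μ := fun τ =>
    (integrable_const (1 : ℝ)).mono' ((hZm τ).mono (ℱ.le τ)).aestronglyMeasurable
      (Filter.Eventually.of_forall fun ω => by
        rw [Real.norm_eq_abs, abs_of_nonneg (hZ01 τ ω).1]; exact (hZ01 τ ω).2)
  have hPm : ∀ τ, StronglyMeasurable[ℱ (τ - 1)] (probeP μ ℱ Y S τ) := fun τ =>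
    stronglyMeasurable_condExp
  have hP0 : ∀ τ, 0 ≤ᵐ[μ] probeP μ ℱ Y S τ := fun τ =>
    condExp_nonneg (Filter.Eventually.of_forall fun ω => (hZ01 τ ω).1)
  have hP1 : ∀ τ, probeP μ ℱ Y S τ ≤ᵐ[μ] fun _ => (1 : ℝ) := fun τ => by
    have h := condExp_mono (m := ℱ (τ - 1)) (hZint τ) (integrable_const (1 : ℝ))
      (Filter.Eventually.of_forall fun ω => (hZ01 τ ω).2)
    rwa [condExp_const (ℱ.le _)] at h
  have hadp : ∀ τ, StronglyMeasurable[ℱ τ] (d τ) := fun τ =>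
    (hZm τ).sub ((hPm τ).mono (ℱ.mono (Nat.sub_le τ 1)))
  have hbd : ∀ τ, ∀ᵐ ω ∂μ, |d τ ω| ≤ 1 := fun τ => by
    filter_upwards [hP0 τ, hP1 τ] with ω h0 h1
    have h01 := hZ01 τ ω
    rw [abs_le]
    constructor
    · simp only [hd]; have := h1; simp only [Pi.zero_apply] at h0; linarith [h01.1]
    · simp only [hd]; simp only [Pi.zero_apply] at h0; linarith [h01.2]
  have hmart : ∀ τ, μ[d τ | ℱ (τ - 1)] =ᵐ[μ] 0 := fun τ => by
    have hsub : μ[d τ | ℱ (τ - 1)] =ᵐ[μ]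
        μ[probeZ Y S τ | ℱ (τ - 1)] - μ[probeP μ ℱ Y S τ | ℱ (τ - 1)] :=
      condExp_sub (hZint τ) integrable_condExp _
    have heq : μ[probeP μ ℱ Y S τ | ℱ (τ - 1)] = probeP μ ℱ Y S τ :=
      condExp_of_stronglyMeasurable (ℱ.le _) stronglyMeasurable_condExp integrable_condExp
    refine hsub.trans ?_
    rw [heq]
    refine Filter.Eventually.of_forall fun ω => ?_
    simp only [Pi.sub_apply, Pi.zero_apply, probeP, sub_self]
  set W : Ω → ℝ := fun ω => ∑ τ ∈ Icc (l + 1) (l + t), d τ ω with hW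
  have htpos : (0 : ℝ) < t := by exact_mod_cast ht
  have hkey : ∀ ω, trueMix μ ℱ Y l t S ω - empMix Y l t S ω = -((1 / (t : ℝ)) * W ω) := by
    intro ω
    simp only [trueMix, empMix, hW, hd, Finset.sum_sub_distrib]
    ring
  have hsubset : {ω | ε ≤ |trueMix μ ℱ Y l t S ω - empMix Y l t S ω|} ⊆
      {ω | (t : ℝ) * ε ≤ W ω} ∪ {ω | (t : ℝ) * ε ≤ -W ω} := by
    intro ω hω
    simp only [Set.mem_setOf_eq] at hω
    rw [hkey ω, abs_neg, abs_mul, abs_of_pos (by positivity : (0 : ℝ) < 1 / (t : ℝ))] at hω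
    have habs : (t : ℝ) * ε ≤ |W ω| := by
      calc (t : ℝ) * ε ≤ (t : ℝ) * (1 / (t : ℝ) * |W ω|) :=
            mul_le_mul_of_nonneg_left hω htpos.le
        _ = |W ω| := by field_simp
    rcases le_abs.mp habs with h | h
    · exact Or.inl h
    · exact Or.inr h
  have hmgf1 := mgf_sum_le hadp hbd hmart l ε t
  have hadp' : ∀ τ, StronglyMeasurable[ℱ τ] (fun ω => -(d τ ω)) := fun τ => (hadp τ).neg
  have hbd' : ∀ τ, ∀ᵐ ω ∂μ, |(fun ω => -(d τ ω)) ω| ≤ 1 := fun τ => by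
    filter_upwards [hbd τ] with ω h using by rwa [abs_neg]
  have hmart' : ∀ τ, μ[(fun ω => -(d τ ω)) | ℱ (τ - 1)] =ᵐ[μ] 0 := fun τ => by
    refine (condExp_neg (d τ) _).trans ?_
    filter_upwards [hmart τ] with ω h
    simp only [Pi.neg_apply, Pi.zero_apply] at h ⊢
    rw [h, neg_zero]
  have hmgf2 := mgf_sum_le hadp' hbd' hmart' l ε t
  have hWneg : ∀ ω, ∑ τ ∈ Icc (l + 1) (l + t), -(d τ ω) = -W ω := fun ω => by
    rw [hW, Finset.sum_neg_distrib]
  simp only [hWneg] at hmgf2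
  have hc1 := chernoff_aux (n := t) hε hmgf1.1 hmgf1.2
  have hc2 := chernoff_aux (W := fun ω => -W ω) (n := t) hε hmgf2.1 hmgf2.2
  calc μ {ω | ε ≤ |trueMix μ ℱ Y l t S ω - empMix Y l t S ω|}
      ≤ μ ({ω | (t : ℝ) * ε ≤ W ω} ∪ {ω | (t : ℝ) * ε ≤ -W ω}) := measure_mono hsubset
    _ ≤ μ {ω | (t : ℝ) * ε ≤ W ω} + μ {ω | (t : ℝ) * ε ≤ -W ω} := measure_union_le _ _
    _ ≤ ENNReal.ofReal (Real.exp (-(t : ℝ) * ε ^ 2 / 2))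
        + ENNReal.ofReal (Real.exp (-(t : ℝ) * ε ^ 2 / 2)) := add_le_add hc1 hc2
    _ = ENNReal.ofReal (2 * Real.exp (-(t : ℝ) * ε ^ 2 / 2)) := by
        rw [← ENNReal.ofReal_add (Real.exp_nonneg _) (Real.exp_nonneg _)]
        congr 1; ring

lemma probe_tv {Ω : Type*} {m0 : MeasurableSpace Ω}
    (μ : Measure Ω) [IsProbabilityMeasure μ] (ℱ : Filtration ℕ m0)
    {M : ℕ} (Y : ℕ → Ω → Fin M) (hY : ∀ τ, Measurable[ℱ τ] (Y τ))
    (l t : ℕ) (ht : 1 ≤ t) {ε : ℝ} (hε : 0 < ε) :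
    μ {ω | ε ≤ tvMix μ ℱ Y l t ω} ≤
      ENNReal.ofReal (2 ^ (M + 1) * Real.exp (-(t : ℝ) * ε ^ 2 / 2)) := by
  have hsub : {ω | ε ≤ tvMix μ ℱ Y l t ω} ⊆
      ⋃ S ∈ (Finset.univ : Finset (Finset (Fin M))),
        {ω | ε ≤ |trueMix μ ℱ Y l t S ω - empMix Y l t S ω|} := by
    intro ω hω
    obtain ⟨S, hS⟩ := exists_eq_ciSup_of_finite
      (f := fun S : Finset (Fin M) => |trueMix μ ℱ Y l t S ω - empMix Y l t S ω|)
    refine Set.mem_biUnion (Finset.mem_univ S) ?_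
    have h2 : ε ≤ |trueMix μ ℱ Y l t S ω - empMix Y l t S ω| := by
      rw [hS]; exact hω
    exact h2
  calc μ {ω | ε ≤ tvMix μ ℱ Y l t ω}
      ≤ ∑ S ∈ (Finset.univ : Finset (Finset (Fin M))),
          μ {ω | ε ≤ |trueMix μ ℱ Y l t S ω - empMix Y l t S ω|} :=
        (measure_mono hsub).trans (measure_biUnion_finset_le _ _)
    _ ≤ ∑ _S ∈ (Finset.univ : Finset (Finset (Fin M))),
          ENNReal.ofReal (2 * Real.exp (-(t : ℝ) * ε ^ 2 / 2)) :=
        Finset.sum_le_sum fun S _ => probe_single μ ℱ Y hY S l t ht hε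
    _ = (2 ^ M) • ENNReal.ofReal (2 * Real.exp (-(t : ℝ) * ε ^ 2 / 2)) := by
        rw [Finset.sum_const, Finset.card_univ, Fintype.card_finset, Fintype.card_fin]
    _ = ENNReal.ofReal (2 ^ (M + 1) * Real.exp (-(t : ℝ) * ε ^ 2 / 2)) := by
        rw [nsmul_eq_mul, ← ENNReal.ofReal_natCast (2 ^ M),
          ← ENNReal.ofReal_mul (by positivity)]
        congr 1; push_cast; ring


/-- **Union bound over start indices and window lengths.**
Fix `i ∈ ℕ`, `k ≥ 2` and `ε > 0`.  The probability that
`TV(P̄_l^{l+t}, P̂_l^{l+t}) ≥ ε` for some start index `l ∈ {i+1, …, i+k}` and some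
window length `t ∈ {k−1, k}` is at most the sum of the individual probabilities,
which is at most `2^{M+2} · k · exp(−(k−1) ε² / 2)`. -/
theorem probe_concentration_union {Ω : Type*} {m0 : MeasurableSpace Ω}
    (μ : Measure Ω) [IsProbabilityMeasure μ] (ℱ : Filtration ℕ m0)
    {M : ℕ} (hM : 1 ≤ M) (Y : ℕ → Ω → Fin M)
    (hY : ∀ τ, Measurable[ℱ τ] (Y τ))
    (i k : ℕ) (hk : 2 ≤ k) {ε : ℝ} (hε : 0 < ε) :
    (μ {ω | ∃ l ∈ Icc (i + 1) (i + k), ∃ t ∈ ({k - 1, k} : Finset ℕ),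
        ε ≤ tvMix μ ℱ Y l t ω} ≤
      ∑ l ∈ Icc (i + 1) (i + k), ∑ t ∈ ({k - 1, k} : Finset ℕ),
        μ {ω | ε ≤ tvMix μ ℱ Y l t ω}) ∧
    ((∑ l ∈ Icc (i + 1) (i + k), ∑ t ∈ ({k - 1, k} : Finset ℕ),
        μ {ω | ε ≤ tvMix μ ℱ Y l t ω}) ≤
      ENNReal.ofReal (2 ^ (M + 2) * k * Real.exp (-((k : ℝ) - 1) * ε ^ 2 / 2))) := by
  constructor
  · have hset : {ω | ∃ l ∈ Icc (i + 1) (i + k), ∃ t ∈ ({k - 1, k} : Finset ℕ),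
        ε ≤ tvMix μ ℱ Y l t ω} =
        ⋃ l ∈ Icc (i + 1) (i + k), ⋃ t ∈ ({k - 1, k} : Finset ℕ),
          {ω | ε ≤ tvMix μ ℱ Y l t ω} := by
      ext ω
      simp only [Set.mem_setOf_eq, Set.mem_iUnion, exists_prop]
    rw [hset]
    refine (measure_biUnion_finset_le _ _).trans (Finset.sum_le_sum fun l _ => ?_)
    exact measure_biUnion_finset_le _ _
  · set C := ENNReal.ofReal (2 ^ (M + 1) * Real.exp (-((k : ℝ) - 1) * ε ^ 2 / 2)) with hC
    have hkey : ∀ l ∈ Icc (i + 1) (i + k), ∀ t ∈ ({k - 1, k} : Finset ℕ),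
        μ {ω | ε ≤ tvMix μ ℱ Y l t ω} ≤ C := by
      intro l _ t htmem
      simp only [Finset.mem_insert, Finset.mem_singleton] at htmem
      have ht1 : 1 ≤ t := by omega
      have htk : ((k : ℝ) - 1) ≤ (t : ℝ) := by
        rcases htmem with h | h <;> subst h
        · rw [Nat.cast_sub (by omega)]; norm_num
        · have : (0:ℝ) ≤ 1 := zero_le_one
          linarith
      refine (probe_tv μ ℱ Y hY l t ht1 hε).trans (ENNReal.ofReal_le_ofReal ?_)
      have hexp : Real.exp (-(t : ℝ) * ε ^ 2 / 2) ≤ Real.exp (-((k : ℝ) - 1) * ε ^ 2 / 2) := by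
        apply Real.exp_le_exp.2
        have hε2 : (0 : ℝ) ≤ ε ^ 2 := sq_nonneg ε
        nlinarith
      exact mul_le_mul_of_nonneg_left hexp (by positivity)
    have hcard1 : (Icc (i + 1) (i + k)).card = k := by rw [Nat.card_Icc]; omega
    have hcard2 : ({k - 1, k} : Finset ℕ).card = 2 := by
      rw [Finset.card_insert_of_notMem (by simp only [Finset.mem_singleton]; omega),
        Finset.card_singleton]
    calc ∑ l ∈ Icc (i + 1) (i + k), ∑ t ∈ ({k - 1, k} : Finset ℕ),
          μ {ω | ε ≤ tvMix μ ℱ Y l t ω}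
        ≤ ∑ _l ∈ Icc (i + 1) (i + k), ∑ _t ∈ ({k - 1, k} : Finset ℕ), C :=
          Finset.sum_le_sum fun l hl => Finset.sum_le_sum fun t ht => hkey l hl t ht
      _ = (k * 2) • C := by
          rw [Finset.sum_const, Finset.sum_const, hcard1, hcard2, smul_smul]
      _ = ENNReal.ofReal (2 ^ (M + 2) * k * Real.exp (-((k : ℝ) - 1) * ε ^ 2 / 2)) := by
          rw [hC, nsmul_eq_mul, ← ENNReal.ofReal_natCast (k * 2),
            ← ENNReal.ofReal_mul (by positivity)]
          congr 1; push_cast; ring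
end

section
/- (Soundness of the ε-accurate empirical stopping criterion.) With the probe setup below, fix i ∈ ℕ, k ≥ 2, ε > 0, and δ ∈ (0,1), and suppose 2^{M+2}·(k+1)·exp(−(k−1)·ε²/18) ≤ δ. Then with probability at least 1 − δ the following implication holds: if the empirical stopping criterion is met, i.e. TV(P̂_i^{i+k}, P̂_{i+j}^{i+j+k}) ≤ ε/3 for all 1 ≤ j ≤ k and TV(P̂_i^{i+k−1}, P̂_{i+j}^{i+j+k−1}) ≤ ε/3 for all 1 ≤ j ≤ k−1, then the true mixtures satisfy TV(P̄_i^{i+k}, P̄_{i+j}^{i+j+k}) ≤ ε for all 1 ≤ j ≤ k and TV(P̄_i^{i+k−1}, P̄_{i+j}^{i+j+k−1}) ≤ ε for all 1 ≤ j ≤ k−1. -/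
open MeasureTheory Finset

/-- Total variation distance between two set functions `Q, R : Finset (Fin M) → ℝ`:
`TV(Q, R) = sup_{S ⊆ Fin M} |Q S − R S|`. -/
noncomputable def tvSetFn {M : ℕ} (Q R : Finset (Fin M) → ℝ) : ℝ :=
  ⨆ S : Finset (Fin M), |Q S - R S|

/-! ### Auxiliary lemmas -/

section Aux

lemma aux_exp_mul_le_cosh_add (lam x : ℝ) (hx : |x| ≤ 1) :
    Real.exp (lam * x) ≤ Real.cosh lam + x * Real.sinh lam := by
  rw [abs_le] at hx
  have h := convexOn_exp.2 (Set.mem_univ (-lam)) (Set.mem_univ lam)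
    (by linarith : (0:ℝ) ≤ (1 - x)/2) (by linarith : (0:ℝ) ≤ (1 + x)/2) (by ring)
  simp only [smul_eq_mul] at h
  have hx2 : (1 - x)/2 * (-lam) + (1 + x)/2 * lam = lam * x := by ring
  rw [hx2] at h
  rw [Real.cosh_eq, Real.sinh_eq]
  calc Real.exp (lam * x) ≤ (1 - x)/2 * Real.exp (-lam) + (1 + x)/2 * Real.exp lam := h
    _ = (Real.exp lam + Real.exp (-lam))/2 + x * ((Real.exp lam - Real.exp (-lam))/2) := by ring

variable {Ω : Type*} {m0 : MeasurableSpace Ω} {μ : Measure Ω} [IsProbabilityMeasure μ]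

lemma aux_integrable_of_bounded_meas {f : Ω → ℝ} (hf : AEStronglyMeasurable f μ) {C : ℝ}
    (hC : ∀ᵐ ω ∂μ, ‖f ω‖ ≤ C) : Integrable f μ :=
  Integrable.mono' (integrable_const C) hf hC

/-- Conditional Hoeffding lemma for a variable bounded by 1 with zero conditional mean. -/
lemma aux_condexp_exp_le {m : MeasurableSpace Ω} (hm : m ≤ m0) {f : Ω → ℝ}
    (hmeas : AEStronglyMeasurable[m0] f μ)
    (hbdd : ∀ᵐ ω ∂μ, |f ω| ≤ 1) (hzero : μ[f | m] =ᵐ[μ] 0) (lam : ℝ) :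
    μ[fun ω => Real.exp (lam * f ω) | m] ≤ᵐ[μ] fun _ => Real.exp (lam ^ 2 / 2) := by
  have hexp_bdd : ∀ᵐ ω ∂μ, ‖Real.exp (lam * f ω)‖ ≤ Real.exp |lam| := by
    filter_upwards [hbdd] with ω hω
    rw [Real.norm_eq_abs, abs_of_pos (Real.exp_pos _)]
    apply Real.exp_le_exp.2
    calc lam * f ω ≤ |lam * f ω| := le_abs_self _
      _ = |lam| * |f ω| := abs_mul _ _
      _ ≤ |lam| * 1 := mul_le_mul_of_nonneg_left hω (abs_nonneg _)
      _ = |lam| := mul_one _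
  have hint_exp : Integrable (fun ω => Real.exp (lam * f ω)) μ :=
    aux_integrable_of_bounded_meas ((Real.continuous_exp.comp_aestronglyMeasurable
      (hmeas.const_mul lam))) hexp_bdd
  have hint_f : Integrable f μ := aux_integrable_of_bounded_meas hmeas
    (hbdd.mono fun ω h => by rwa [Real.norm_eq_abs])
  have h1 : μ[fun ω => Real.exp (lam * f ω) | m] ≤ᵐ[μ]
      μ[fun ω => Real.cosh lam + f ω * Real.sinh lam | m] := by
    refine condExp_mono hint_exp ?_ ?_
    · exact (integrable_const (Real.cosh lam)).add (hint_f.mul_const _)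
    · filter_upwards [hbdd] with ω hω
      exact aux_exp_mul_le_cosh_add lam (f ω) hω
  have h2 : μ[fun ω => Real.cosh lam + f ω * Real.sinh lam | m] =ᵐ[μ]
      fun _ => Real.cosh lam := by
    have h3 := condExp_add (μ := μ) (m := m) (integrable_const (Real.cosh lam))
      (hint_f.mul_const (Real.sinh lam)) (f := fun _ => Real.cosh lam)
      (g := fun ω => f ω * Real.sinh lam)
    refine h3.trans ?_
    have hc : μ[(fun _ => Real.cosh lam : Ω → ℝ) | m] = fun _ => Real.cosh lam :=
      condExp_const hm _
    have hs : μ[fun ω => f ω * Real.sinh lam | m] =ᵐ[μ] fun ω => (μ[f|m]) ω * Real.sinh lam := by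
      have hsm : (fun ω => f ω * Real.sinh lam) = fun ω => Real.sinh lam • f ω := by
        ext ω; simp [smul_eq_mul]; ring
      rw [hsm]
      exact (condExp_smul (μ := μ) (m := m) (Real.sinh lam) f).trans
        (by filter_upwards with ω; simp [smul_eq_mul, mul_comm])
    filter_upwards [hs, hzero] with ω hsw h0w
    simp only [Pi.add_apply, hc, hsw, h0w, Pi.zero_apply, zero_mul, add_zero]
  refine (h1.trans_eq h2).trans (Filter.Eventually.of_forall fun ω => ?_)
  simpa [sq] using Real.cosh_le_exp_half_sq lam

variable (ℱ : Filtration ℕ m0)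

lemma aux_integrable_exp_sum (f : ℕ → Ω → ℝ)
    (hadp : ∀ τ, StronglyMeasurable[ℱ τ] (f τ))
    (hbdd : ∀ τ, ∀ᵐ ω ∂μ, |f τ ω| ≤ 1)
    (l t : ℕ) (lam : ℝ) :
    Integrable (fun ω => Real.exp (lam * ∑ τ ∈ Icc (l+1) (l+t), f τ ω)) μ := by
  apply aux_integrable_of_bounded_meas (C := Real.exp (|lam| * t))
  · exact Real.continuous_exp.comp_aestronglyMeasurable
      ((Finset.aestronglyMeasurable_fun_sum _ fun τ _ =>
        ((hadp τ).mono (ℱ.le _)).aestronglyMeasurable).const_mul lam)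
  · have h := ae_all_iff.mpr hbdd
    filter_upwards [h] with ω hω
    rw [Real.norm_eq_abs, abs_of_pos (Real.exp_pos _), Real.exp_le_exp]
    calc lam * _ ≤ |lam * _| := le_abs_self _
      _ = |lam| * |∑ τ ∈ Icc (l+1) (l+t), f τ ω| := abs_mul _ _
      _ ≤ |lam| * t := by
          apply mul_le_mul_of_nonneg_left _ (abs_nonneg _)
          calc |∑ τ ∈ Icc (l+1) (l+t), f τ ω| ≤ ∑ τ ∈ Icc (l+1) (l+t), |f τ ω| :=
                Finset.abs_sum_le_sum_abs _ _
            _ ≤ ∑ _τ ∈ Icc (l+1) (l+t), (1:ℝ) := Finset.sum_le_sum fun τ _ => hω τ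
            _ = ((l+t+1-(l+1) : ℕ) : ℝ) := by
                rw [Finset.sum_const, Nat.card_Icc, nsmul_eq_mul, mul_one]
            _ = (t:ℝ) := by congr 1; omega

lemma aux_azuma_mgf (f : ℕ → Ω → ℝ)
    (hadp : ∀ τ, StronglyMeasurable[ℱ τ] (f τ))
    (hbdd : ∀ τ, ∀ᵐ ω ∂μ, |f τ ω| ≤ 1)
    (hzero : ∀ τ, μ[f (τ+1) | ℱ τ] =ᵐ[μ] 0)
    (l : ℕ) (lam : ℝ) : ∀ t : ℕ,
    ∫ ω, Real.exp (lam * ∑ τ ∈ Icc (l+1) (l+t), f τ ω) ∂μ ≤ Real.exp (t * lam ^ 2 / 2) := by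
  have hmeasS : ∀ t : ℕ, StronglyMeasurable[ℱ (l+t)]
      (fun ω => ∑ τ ∈ Icc (l+1) (l+t), f τ ω) := by
    intro t
    apply Finset.stronglyMeasurable_fun_sum
    intro τ hτ
    exact (hadp τ).mono (ℱ.mono (mem_Icc.mp hτ).2)
  have hintS : ∀ t : ℕ, Integrable (fun ω => Real.exp (lam * ∑ τ ∈ Icc (l+1) (l+t), f τ ω)) μ :=
    fun t => aux_integrable_exp_sum ℱ f hadp hbdd l t lam
  intro t
  induction t with
  | zero => simp
  | succ t ih =>
    have hsplit : ∀ ω, ∑ τ ∈ Icc (l+1) (l+(t+1)), f τ ω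
        = (∑ τ ∈ Icc (l+1) (l+t), f τ ω) + f (l+t+1) ω := by
      intro ω
      have h : l + (t+1) = (l+t) + 1 := by ring
      rw [h, Finset.sum_Icc_succ_top (by omega : l+1 ≤ l+t+1)]
    have hG := hmeasS t
    set m := ℱ (l+t) with hm_def
    have hm : m ≤ m0 := ℱ.le _
    set G : Ω → ℝ := fun ω => Real.exp (lam * ∑ τ ∈ Icc (l+1) (l+t), f τ ω) with hG_def
    set H : Ω → ℝ := fun ω => Real.exp (lam * f (l+t+1) ω) with hH_def
    have hGmeas : StronglyMeasurable[m] G :=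
      (Real.continuous_exp.comp_stronglyMeasurable (hG.const_mul lam))
    have hHmeas : AEStronglyMeasurable[m0] H μ :=
      Real.continuous_exp.comp_aestronglyMeasurable
        ((((hadp _).mono (ℱ.le _)).aestronglyMeasurable).const_mul lam)
    have hHbdd : ∀ᵐ ω ∂μ, ‖H ω‖ ≤ Real.exp |lam| := by
      filter_upwards [hbdd (l+t+1)] with ω hω
      rw [Real.norm_eq_abs, abs_of_pos (Real.exp_pos _), Real.exp_le_exp]
      calc lam * f (l+t+1) ω ≤ |lam * f (l+t+1) ω| := le_abs_self _
        _ = |lam| * |f (l+t+1) ω| := abs_mul _ _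
        _ ≤ |lam| * 1 := mul_le_mul_of_nonneg_left hω (abs_nonneg _)
        _ = |lam| := mul_one _
    have hHint : Integrable H μ := aux_integrable_of_bounded_meas hHmeas hHbdd
    have hGH_eq : (fun ω => Real.exp (lam * ∑ τ ∈ Icc (l+1) (l+(t+1)), f τ ω)) = G * H := by
      funext ω
      simp only [hsplit ω, Pi.mul_apply, hG_def, hH_def, mul_add, Real.exp_add]
    have hGHint : Integrable (G * H) μ := by
      rw [← hGH_eq]; exact hintS (t+1)
    have hcond : μ[G * H | m] =ᵐ[μ] G * μ[H | m] :=
      condExp_mul_of_stronglyMeasurable_left hGmeas hGHint hHint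
    have hHcond : μ[H | m] ≤ᵐ[μ] fun _ => Real.exp (lam ^ 2 / 2) :=
      aux_condexp_exp_le hm (((hadp _).mono (ℱ.le _)).aestronglyMeasurable)
        (hbdd (l+t+1)) (hzero (l+t)) lam
    have hGnonneg : ∀ ω, 0 ≤ G ω := fun ω => (Real.exp_pos _).le
    calc ∫ ω, Real.exp (lam * ∑ τ ∈ Icc (l+1) (l+(t+1)), f τ ω) ∂μ
        = ∫ ω, (G * H) ω ∂μ := by rw [hGH_eq]
      _ = ∫ ω, (μ[G * H | m]) ω ∂μ := (integral_condExp hm).symm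
      _ ≤ ∫ ω, G ω * Real.exp (lam ^ 2 / 2) ∂μ := by
          apply integral_mono_ae integrable_condExp ((hintS t).mul_const _)
          filter_upwards [hcond, hHcond] with ω h1 h2
          rw [h1]
          exact mul_le_mul_of_nonneg_left h2 (hGnonneg ω)
      _ = (∫ ω, G ω ∂μ) * Real.exp (lam ^ 2 / 2) := integral_mul_const _ _
      _ ≤ Real.exp (t * lam ^ 2 / 2) * Real.exp (lam ^ 2 / 2) :=
          mul_le_mul_of_nonneg_right ih (Real.exp_pos _).le
      _ = Real.exp ((t+1 : ℕ) * lam ^ 2 / 2) := by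
          rw [← Real.exp_add]; congr 1; push_cast; ring

lemma aux_azuma_upper (f : ℕ → Ω → ℝ)
    (hadp : ∀ τ, StronglyMeasurable[ℱ τ] (f τ))
    (hbdd : ∀ τ, ∀ᵐ ω ∂μ, |f τ ω| ≤ 1)
    (hzero : ∀ τ, μ[f (τ+1) | ℱ τ] =ᵐ[μ] 0)
    (l t : ℕ) (ht : 1 ≤ t) {a : ℝ} (ha : 0 ≤ a) :
    μ {ω | a ≤ ∑ τ ∈ Icc (l+1) (l+t), f τ ω} ≤ ENNReal.ofReal (Real.exp (-a^2/(2*t))) := by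
  have htpos : (0:ℝ) < t := by exact_mod_cast ht
  set lam : ℝ := a / t with hlam_def
  have hlam : 0 ≤ lam := div_nonneg ha htpos.le
  set X : Ω → ℝ := fun ω => ∑ τ ∈ Icc (l+1) (l+t), f τ ω with hX_def
  have hint : Integrable (fun ω => Real.exp (lam * X ω)) μ :=
    aux_integrable_exp_sum ℱ f hadp hbdd l t lam
  have h1 := ProbabilityTheory.measure_ge_le_exp_mul_mgf (μ := μ) (X := X) a hlam hint
  have h2 : ProbabilityTheory.mgf X μ lam ≤ Real.exp (t * lam ^ 2 / 2) :=
    aux_azuma_mgf ℱ f hadp hbdd hzero l lam t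
  have h3 : Real.exp (-lam * a) * Real.exp ((t:ℝ) * lam ^ 2 / 2) = Real.exp (-a^2/(2*t)) := by
    rw [← Real.exp_add]
    congr 1
    rw [hlam_def]
    field_simp
    ring
  have h4 : (μ {ω | a ≤ X ω}).toReal ≤ Real.exp (-a^2/(2*t)) := by
    calc (μ {ω | a ≤ X ω}).toReal ≤ Real.exp (-lam * a) * ProbabilityTheory.mgf X μ lam := h1
      _ ≤ Real.exp (-lam * a) * Real.exp ((t:ℝ) * lam ^ 2 / 2) :=
          mul_le_mul_of_nonneg_left h2 (Real.exp_pos _).le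
      _ = _ := h3
  calc μ {ω | a ≤ X ω} = ENNReal.ofReal (μ {ω | a ≤ X ω}).toReal :=
        (ENNReal.ofReal_toReal (measure_ne_top _ _)).symm
    _ ≤ ENNReal.ofReal (Real.exp (-a^2/(2*t))) := ENNReal.ofReal_le_ofReal h4

lemma aux_azuma_abs (f : ℕ → Ω → ℝ)
    (hadp : ∀ τ, StronglyMeasurable[ℱ τ] (f τ))
    (hbdd : ∀ τ, ∀ᵐ ω ∂μ, |f τ ω| ≤ 1)
    (hzero : ∀ τ, μ[f (τ+1) | ℱ τ] =ᵐ[μ] 0)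
    (l t : ℕ) (ht : 1 ≤ t) {a : ℝ} (ha : 0 ≤ a) :
    μ {ω | a ≤ |∑ τ ∈ Icc (l+1) (l+t), f τ ω|}
      ≤ ENNReal.ofReal (2 * Real.exp (-a^2/(2*t))) := by
  have hup := aux_azuma_upper ℱ f hadp hbdd hzero l t ht ha
  have hneg := aux_azuma_upper ℱ (fun τ => -(f τ)) (fun τ => (hadp τ).neg)
    (fun τ => (hbdd τ).mono fun ω h => by simpa using h)
    (fun τ => (condExp_neg (f (τ+1)) _).trans (by filter_upwards [hzero τ] with ω h; simp [h]))
    l t ht ha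
  have hneg' : μ {ω | a ≤ -(∑ τ ∈ Icc (l+1) (l+t), f τ ω)}
      ≤ ENNReal.ofReal (Real.exp (-a^2/(2*t))) := by
    convert hneg using 3
    funext ω
    simp [Finset.sum_neg_distrib]
  have hsub : {ω | a ≤ |∑ τ ∈ Icc (l+1) (l+t), f τ ω|}
      ⊆ {ω | a ≤ ∑ τ ∈ Icc (l+1) (l+t), f τ ω}
        ∪ {ω | a ≤ -(∑ τ ∈ Icc (l+1) (l+t), f τ ω)} := by
    intro ω h
    rcases abs_cases (∑ τ ∈ Icc (l+1) (l+t), f τ ω) with ⟨he, _⟩ | ⟨he, _⟩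
    · left; rw [Set.mem_setOf_eq, ← he]; exact h
    · right; rw [Set.mem_setOf_eq, ← he]; exact h
  calc μ {ω | a ≤ |∑ τ ∈ Icc (l+1) (l+t), f τ ω|}
      ≤ μ ({ω | a ≤ ∑ τ ∈ Icc (l+1) (l+t), f τ ω}
        ∪ {ω | a ≤ -(∑ τ ∈ Icc (l+1) (l+t), f τ ω)}) := measure_mono hsub
    _ ≤ _ + _ := measure_union_le _ _
    _ ≤ ENNReal.ofReal (Real.exp (-a^2/(2*t))) + ENNReal.ofReal (Real.exp (-a^2/(2*t))) :=
        add_le_add hup hneg'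
    _ = ENNReal.ofReal (2 * Real.exp (-a^2/(2*t))) := by
        rw [← ENNReal.ofReal_add (Real.exp_pos _).le (Real.exp_pos _).le]; ring_nf

/-! ### Probe-specific lemmas -/

lemma aux_tvSetFn_le {M : ℕ} {Q R : Finset (Fin M) → ℝ} {c : ℝ}
    (h : ∀ S, |Q S - R S| ≤ c) : tvSetFn Q R ≤ c :=
  ciSup_le h

lemma aux_le_tvSetFn {M : ℕ} (Q R : Finset (Fin M) → ℝ) (S : Finset (Fin M)) :
    |Q S - R S| ≤ tvSetFn Q R :=
  le_ciSup (f := fun S => |Q S - R S|) (Set.Finite.bddAbove (Set.finite_range _)) S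

variable {M : ℕ} (Y : ℕ → Ω → Fin M)

/-- The martingale difference of the probe. -/
noncomputable def probeF (S : Finset (Fin M)) (τ : ℕ) (ω : Ω) : ℝ :=
  probeZ Y S τ ω - probeP μ ℱ Y S τ ω

lemma aux_probeZ_meas (hY : ∀ τ, Measurable[ℱ τ] (Y τ)) (S : Finset (Fin M)) (τ : ℕ) :
    StronglyMeasurable[ℱ τ] (probeZ Y S τ) := by
  have hset : MeasurableSet[ℱ τ] {ω | Y τ ω ∈ S} :=
    hY τ (Set.Finite.measurableSet (Set.toFinite _))
  exact ((Measurable.ite hset measurable_const measurable_const)).stronglyMeasurable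

lemma aux_probeZ_bdd (S : Finset (Fin M)) (τ : ℕ) (ω : Ω) :
    0 ≤ probeZ Y S τ ω ∧ probeZ Y S τ ω ≤ 1 := by
  unfold probeZ; split <;> norm_num

lemma aux_probeZ_int (hY : ∀ τ, Measurable[ℱ τ] (Y τ)) (S : Finset (Fin M)) (τ : ℕ) :
    Integrable (probeZ Y S τ) μ := by
  apply aux_integrable_of_bounded_meas (C := 1)
    ((aux_probeZ_meas ℱ Y hY S τ).mono (ℱ.le τ)).aestronglyMeasurable
  filter_upwards with ω
  rw [Real.norm_eq_abs, abs_le]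
  have h := aux_probeZ_bdd Y S τ ω
  constructor <;> linarith [h.1, h.2]

lemma aux_probeP_bdd (hY : ∀ τ, Measurable[ℱ τ] (Y τ)) (S : Finset (Fin M)) (τ : ℕ) :
    ∀ᵐ ω ∂μ, 0 ≤ probeP μ ℱ Y S τ ω ∧ probeP μ ℱ Y S τ ω ≤ 1 := by
  have h0 : (0 : Ω → ℝ) ≤ᵐ[μ] probeP μ ℱ Y S τ :=
    condExp_nonneg (Filter.Eventually.of_forall fun ω => (aux_probeZ_bdd Y S τ ω).1)
  have h1 : probeP μ ℱ Y S τ ≤ᵐ[μ] fun _ => (1:ℝ) := by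
    have h := condExp_mono (μ := μ) (m := ℱ (τ-1)) (aux_probeZ_int ℱ Y hY S τ)
      (integrable_const 1) (Filter.Eventually.of_forall fun ω => (aux_probeZ_bdd Y S τ ω).2)
    refine h.trans ?_
    exact Filter.EventuallyEq.le
      (Filter.EventuallyEq.of_eq (condExp_const (μ := μ) (ℱ.le (τ-1)) (1 : ℝ)))
  filter_upwards [h0, h1] with ω a b
  exact ⟨a, b⟩

lemma aux_probeF_adp (hY : ∀ τ, Measurable[ℱ τ] (Y τ)) (S : Finset (Fin M)) (τ : ℕ) :
    StronglyMeasurable[ℱ τ] (probeF (μ := μ) ℱ Y S τ) :=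
  (aux_probeZ_meas ℱ Y hY S τ).sub (stronglyMeasurable_condExp.mono (ℱ.mono (Nat.sub_le τ 1)))

lemma aux_probeF_bdd (hY : ∀ τ, Measurable[ℱ τ] (Y τ)) (S : Finset (Fin M)) (τ : ℕ) :
    ∀ᵐ ω ∂μ, |probeF (μ := μ) ℱ Y S τ ω| ≤ 1 := by
  filter_upwards [aux_probeP_bdd ℱ Y hY S τ] with ω hp
  have hz := aux_probeZ_bdd Y S τ ω
  rw [probeF, abs_le]
  refine ⟨by linarith [hz.1, hp.2], by linarith [hz.2, hp.1]⟩

lemma aux_probeF_zero (hY : ∀ τ, Measurable[ℱ τ] (Y τ)) (S : Finset (Fin M)) (τ : ℕ) :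
    μ[probeF (μ := μ) ℱ Y S (τ+1) | ℱ τ] =ᵐ[μ] 0 := by
  have hsub := condExp_sub (μ := μ) (m := ℱ τ) (aux_probeZ_int ℱ Y hY S (τ+1))
    (integrable_condExp (f := probeZ Y S (τ+1)) (m := ℱ ((τ+1) - 1)))
  have heq : probeF (μ := μ) ℱ Y S (τ+1)
      = fun ω => probeZ Y S (τ+1) ω - probeP μ ℱ Y S (τ+1) ω := rfl
  rw [heq]
  have hP : probeP μ ℱ Y S (τ+1) = μ[probeZ Y S (τ+1) | ℱ τ] := by
    rw [probeP, Nat.add_sub_cancel]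
  have hcp : μ[probeP μ ℱ Y S (τ+1) | ℱ τ] =ᵐ[μ] probeP μ ℱ Y S (τ+1) := by
    rw [hP]
    exact Filter.EventuallyEq.of_eq
      (condExp_of_stronglyMeasurable (ℱ.le τ) stronglyMeasurable_condExp integrable_condExp)
  refine hsub.trans ?_
  filter_upwards [hcp] with ω h
  have h' : (μ[μ[probeZ Y S (τ+1)|ℱ ((τ+1)-1)]|ℱ τ]) ω = probeP μ ℱ Y S (τ+1) ω := h
  simp only [Pi.sub_apply, Pi.zero_apply]
  rw [h', hP]
  simp

lemma aux_mix_diff (l t : ℕ) (S : Finset (Fin M)) (ω : Ω) :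
    trueMix μ ℱ Y l t S ω - empMix Y l t S ω
      = -((1/(t:ℝ)) * ∑ τ ∈ Icc (l+1) (l+t), probeF (μ := μ) ℱ Y S τ ω) := by
  simp only [trueMix, empMix, probeF, Finset.sum_sub_distrib, mul_sub]
  ring

lemma aux_mix_bad_bound (hY : ∀ τ, Measurable[ℱ τ] (Y τ)) {ε : ℝ} (hε : 0 < ε)
    (l t : ℕ) (S : Finset (Fin M)) (ht : 1 ≤ t) :
    μ {ω | ¬ (|trueMix μ ℱ Y l t S ω - empMix Y l t S ω| ≤ ε/3)}
      ≤ ENNReal.ofReal (2 * Real.exp (-((t:ℝ) * ε^2/18))) := by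
  have htpos : (0:ℝ) < t := by exact_mod_cast ht
  have ha : (0:ℝ) ≤ (t:ℝ)*ε/3 := by positivity
  have hsub : {ω | ¬ (|trueMix μ ℱ Y l t S ω - empMix Y l t S ω| ≤ ε/3)}
      ⊆ {ω | (t:ℝ)*ε/3 ≤ |∑ τ ∈ Icc (l+1) (l+t), probeF (μ := μ) ℱ Y S τ ω|} := by
    intro ω h
    simp only [Set.mem_setOf_eq, not_le] at h
    rw [aux_mix_diff ℱ Y l t S ω, abs_neg, abs_mul,
      abs_of_pos (by positivity : (0:ℝ) < 1/(t:ℝ))] at h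
    have h' : ε/3 * t < |∑ τ ∈ Icc (l+1) (l+t), probeF (μ := μ) ℱ Y S τ ω| := by
      rw [mul_comm (1/(t:ℝ)) _, mul_one_div, lt_div_iff₀ htpos] at h
      exact h
    simp only [Set.mem_setOf_eq]
    linarith
  refine (measure_mono hsub).trans ?_
  have haz := aux_azuma_abs ℱ (probeF (μ := μ) ℱ Y S) (aux_probeF_adp ℱ Y hY S)
    (aux_probeF_bdd ℱ Y hY S) (aux_probeF_zero ℱ Y hY S) l t ht ha
  refine haz.trans (le_of_eq ?_)
  congr 1
  congr 1
  congr 1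
  field_simp
  ring
end Aux

/-- **Soundness of the ε-accurate empirical stopping criterion.**
Fix `i ∈ ℕ`, `k ≥ 2`, `ε > 0`, `δ ∈ (0,1)`, and suppose
`2^{M+2} · (k+1) · exp(−(k−1) ε² / 18) ≤ δ`.  Then with probability at least
`1 − δ`: if the empirical stopping criterion holds, i.e.
`TV(P̂_i^{i+k}, P̂_{i+j}^{i+j+k}) ≤ ε/3` for all `1 ≤ j ≤ k` and
`TV(P̂_i^{i+k−1}, P̂_{i+j}^{i+j+k−1}) ≤ ε/3` for all `1 ≤ j ≤ k−1`, then the true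
mixtures satisfy the analogous inequalities with tolerance `ε`. -/
theorem empirical_stopping_sound {Ω : Type*} {m0 : MeasurableSpace Ω}
    (μ : Measure Ω) [IsProbabilityMeasure μ] (ℱ : Filtration ℕ m0)
    {M : ℕ} (hM : 1 ≤ M) (Y : ℕ → Ω → Fin M)
    (hY : ∀ τ, Measurable[ℱ τ] (Y τ))
    (i k : ℕ) (hk : 2 ≤ k) {ε δ : ℝ} (hε : 0 < ε) (hδ : δ ∈ Set.Ioo (0 : ℝ) 1)
    (hkey : 2 ^ (M + 2) * (k + 1) * Real.exp (-((k : ℝ) - 1) * ε ^ 2 / 18) ≤ δ) :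
    ENNReal.ofReal (1 - δ) ≤
      μ {ω |
        ((∀ j, 1 ≤ j → j ≤ k →
            tvSetFn (fun S => empMix Y i k S ω) (fun S => empMix Y (i + j) k S ω) ≤ ε / 3) ∧
         (∀ j, 1 ≤ j → j ≤ k - 1 →
            tvSetFn (fun S => empMix Y i (k - 1) S ω)
              (fun S => empMix Y (i + j) (k - 1) S ω) ≤ ε / 3)) →
        ((∀ j, 1 ≤ j → j ≤ k →
            tvSetFn (fun S => trueMix μ ℱ Y i k S ω)
              (fun S => trueMix μ ℱ Y (i + j) k S ω) ≤ ε) ∧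
         (∀ j, 1 ≤ j → j ≤ k - 1 →
            tvSetFn (fun S => trueMix μ ℱ Y i (k - 1) S ω)
              (fun S => trueMix μ ℱ Y (i + j) (k - 1) S ω) ≤ ε))} := by
  obtain ⟨hδ0, hδ1⟩ := hδ
  set L : Finset ℕ := Finset.Icc i (i+k) with hL
  set T : Finset ℕ := {k-1, k} with hT
  set G : Set Ω := {ω | ∀ l ∈ L, ∀ t ∈ T, ∀ S : Finset (Fin M),
    |trueMix μ ℱ Y l t S ω - empMix Y l t S ω| ≤ ε/3} with hGdef
  -- the good event implies the conclusion
  have hincl : G ⊆ {ω |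
        ((∀ j, 1 ≤ j → j ≤ k →
            tvSetFn (fun S => empMix Y i k S ω) (fun S => empMix Y (i + j) k S ω) ≤ ε / 3) ∧
         (∀ j, 1 ≤ j → j ≤ k - 1 →
            tvSetFn (fun S => empMix Y i (k - 1) S ω)
              (fun S => empMix Y (i + j) (k - 1) S ω) ≤ ε / 3)) →
        ((∀ j, 1 ≤ j → j ≤ k →
            tvSetFn (fun S => trueMix μ ℱ Y i k S ω)
              (fun S => trueMix μ ℱ Y (i + j) k S ω) ≤ ε) ∧
         (∀ j, 1 ≤ j → j ≤ k - 1 →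
            tvSetFn (fun S => trueMix μ ℱ Y i (k - 1) S ω)
              (fun S => trueMix μ ℱ Y (i + j) (k - 1) S ω) ≤ ε))} := by
    intro ω hω
    simp only [Set.mem_setOf_eq] at hω ⊢
    rintro ⟨hA, hB⟩
    constructor
    · intro j hj1 hjk
      apply aux_tvSetFn_le
      intro S
      have hg1 := hω i (Finset.mem_Icc.mpr (by omega)) k (by simp [hT]) S
      have hg2 := hω (i+j) (Finset.mem_Icc.mpr (by omega)) k (by simp [hT]) S
      have hmid : |empMix Y i k S ω - empMix Y (i+j) k S ω| ≤ ε/3 :=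
        (aux_le_tvSetFn _ _ S).trans (hA j hj1 hjk)
      have t1 := abs_sub_le (trueMix μ ℱ Y i k S ω) (empMix Y i k S ω)
        (trueMix μ ℱ Y (i+j) k S ω)
      have t2 := abs_sub_le (empMix Y i k S ω) (empMix Y (i+j) k S ω)
        (trueMix μ ℱ Y (i+j) k S ω)
      have habs : |empMix Y (i+j) k S ω - trueMix μ ℱ Y (i+j) k S ω|
          = |trueMix μ ℱ Y (i+j) k S ω - empMix Y (i+j) k S ω| := abs_sub_comm _ _
      linarith
    · intro j hj1 hjk
      apply aux_tvSetFn_le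
      intro S
      have hg1 := hω i (Finset.mem_Icc.mpr (by omega)) (k-1) (by simp [hT]) S
      have hg2 := hω (i+j) (Finset.mem_Icc.mpr (by omega)) (k-1) (by simp [hT]) S
      have hmid : |empMix Y i (k-1) S ω - empMix Y (i+j) (k-1) S ω| ≤ ε/3 :=
        (aux_le_tvSetFn _ _ S).trans (hB j hj1 hjk)
      have t1 := abs_sub_le (trueMix μ ℱ Y i (k-1) S ω) (empMix Y i (k-1) S ω)
        (trueMix μ ℱ Y (i+j) (k-1) S ω)
      have t2 := abs_sub_le (empMix Y i (k-1) S ω) (empMix Y (i+j) (k-1) S ω)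
        (trueMix μ ℱ Y (i+j) (k-1) S ω)
      have habs : |empMix Y (i+j) (k-1) S ω - trueMix μ ℱ Y (i+j) (k-1) S ω|
          = |trueMix μ ℱ Y (i+j) (k-1) S ω - empMix Y (i+j) (k-1) S ω| := abs_sub_comm _ _
      linarith
  -- measure of the bad event
  set c : ENNReal := ENNReal.ofReal (2 * Real.exp (-((k:ℝ)-1) * ε^2/18)) with hc
  have hbadμ : ∀ l ∈ L, ∀ t ∈ T, ∀ S : Finset (Fin M),
      μ {ω | ¬ (|trueMix μ ℱ Y l t S ω - empMix Y l t S ω| ≤ ε/3)} ≤ c := by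
    intro l _ t htmem S
    have ht1 : 1 ≤ t := by
      rw [hT] at htmem
      simp only [Finset.mem_insert, Finset.mem_singleton] at htmem
      omega
    have htk : ((k:ℝ) - 1) ≤ (t:ℝ) := by
      rw [hT] at htmem
      simp only [Finset.mem_insert, Finset.mem_singleton] at htmem
      rcases htmem with h | h <;> rw [h] <;> [skip; skip]
      · rw [Nat.cast_sub (by omega)]; norm_num
      · norm_num
    refine (aux_mix_bad_bound ℱ Y hY hε l t S ht1).trans ?_
    rw [hc]
    apply ENNReal.ofReal_le_ofReal
    have : -((t:ℝ) * ε^2/18) ≤ -((k:ℝ)-1) * ε^2/18 := by nlinarith [sq_nonneg ε]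
    nlinarith [Real.exp_le_exp.mpr this, Real.exp_pos (-((t:ℝ) * ε^2/18))]
  have hGc : μ Gᶜ ≤ ENNReal.ofReal δ := by
    have hsub : Gᶜ ⊆ ⋃ l ∈ L, ⋃ t ∈ T, ⋃ S ∈ (Finset.univ : Finset (Finset (Fin M))),
        {ω | ¬ (|trueMix μ ℱ Y l t S ω - empMix Y l t S ω| ≤ ε/3)} := by
      intro ω hω
      simp only [hGdef, Set.mem_compl_iff, Set.mem_setOf_eq] at hω
      push_neg at hω
      obtain ⟨l, hl, t, ht, S, hS⟩ := hω
      simp only [Set.mem_iUnion, Set.mem_setOf_eq]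
      exact ⟨l, hl, t, ht, S, Finset.mem_univ S, by linarith⟩
    have hcard : (L.card * (T.card * (Finset.univ : Finset (Finset (Fin M))).card))
        = (k+1) * (2 * 2^M) := by
      rw [hL, hT, Nat.card_Icc, Finset.card_insert_of_notMem (by simp; omega),
        Finset.card_singleton, Finset.card_univ, Fintype.card_finset, Fintype.card_fin]
      have h1 : i + k + 1 - i = k + 1 := by omega
      rw [h1]
    calc μ Gᶜ ≤ μ (⋃ l ∈ L, ⋃ t ∈ T, ⋃ S ∈ (Finset.univ : Finset (Finset (Fin M))),
          {ω | ¬ (|trueMix μ ℱ Y l t S ω - empMix Y l t S ω| ≤ ε/3)}) := measure_mono hsub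
      _ ≤ ∑ l ∈ L, ∑ t ∈ T, ∑ S ∈ (Finset.univ : Finset (Finset (Fin M))),
          μ {ω | ¬ (|trueMix μ ℱ Y l t S ω - empMix Y l t S ω| ≤ ε/3)} := by
          refine (measure_biUnion_finset_le _ _).trans (Finset.sum_le_sum fun l hl => ?_)
          refine (measure_biUnion_finset_le _ _).trans (Finset.sum_le_sum fun t ht => ?_)
          exact measure_biUnion_finset_le _ _
      _ ≤ ∑ l ∈ L, ∑ t ∈ T, ∑ S ∈ (Finset.univ : Finset (Finset (Fin M))), c := by
          refine Finset.sum_le_sum fun l hl => Finset.sum_le_sum fun t ht =>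
            Finset.sum_le_sum fun S _ => ?_
          exact hbadμ l hl t ht S
      _ = (L.card * (T.card * (Finset.univ : Finset (Finset (Fin M))).card)) • c := by
          simp only [Finset.sum_const, smul_smul]
      _ = ((k+1) * (2 * 2^M)) • c := by rw [hcard]
      _ ≤ ENNReal.ofReal δ := by
          rw [nsmul_eq_mul, ← ENNReal.ofReal_natCast, hc,
            ← ENNReal.ofReal_mul (Nat.cast_nonneg _)]
          apply ENNReal.ofReal_le_ofReal
          calc (((k+1) * (2 * 2^M) : ℕ) : ℝ) * (2 * Real.exp (-((k:ℝ)-1) * ε^2/18))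
              = 2 ^ (M + 2) * ((k:ℝ) + 1) * Real.exp (-((k : ℝ) - 1) * ε ^ 2 / 18) := by
                push_cast; ring
            _ ≤ δ := hkey
  -- conclude
  have h1 : (1:ENNReal) ≤ μ G + μ Gᶜ := by
    calc (1:ENNReal) = μ Set.univ := measure_univ.symm
      _ = μ (G ∪ Gᶜ) := by rw [Set.union_compl_self]
      _ ≤ μ G + μ Gᶜ := measure_union_le _ _
  have h2 : ENNReal.ofReal (1-δ) ≤ μ G := by
    rw [← ENNReal.add_le_add_iff_right (a := ENNReal.ofReal δ) ENNReal.ofReal_ne_top]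
    calc ENNReal.ofReal (1-δ) + ENNReal.ofReal δ
        = ENNReal.ofReal 1 := by rw [← ENNReal.ofReal_add (by linarith) hδ0.le]; norm_num
      _ = 1 := by simp
      _ ≤ μ G + μ Gᶜ := h1
      _ ≤ μ G + ENNReal.ofReal δ := by gcongr
  exact h2.trans (measure_mono hincl)
end
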